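/- arXiv:1901.02287 — 10 statements merged into one kernel-verified Lean document; each statement's English description precedes it below -/
import Mathlib

section
/- For every n ≥ 1, every puncturing set X ⊆ {0,…,2^n−1}, every t with 0 ≤ t ≤ n, every ℓ with 0 ≤ ℓ ≤ 2^{n−t}−1, and all stages s, s' with 0 ≤ s, s' ≤ t, the number of zero-LLR indices in the block {ℓ·2^t, …, (ℓ+1)·2^t − 1} is the same at stages s and s': |Z_s(X) ∩ {ℓ·2^t, …, (ℓ+1)·2^t − 1}| = |Z_{s'}(X) ∩ {ℓ·2^t, …, (ℓ+1)·2^t − 1}|. -/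
/-- Binary domination: every binary digit of `i` is at most the corresponding digit of `j`. -/
def bdom (i j : ℕ) : Prop := ∀ t, i.testBit t = true → j.testBit t = true

instance (i j : ℕ) : Decidable (bdom i j) :=
  decidable_of_iff (i ||| j = j) (by
    constructor
    · intro h t hi
      have h1 : (i ||| j).testBit t = j.testBit t := by rw [h]
      rw [Nat.testBit_or, hi, Bool.true_or] at h1
      exact h1.symm
    · intro h
      apply Nat.eq_of_testBit_eq
      intro t
      rw [Nat.testBit_or]
      cases hi : i.testBit t with
      | true => simp [h t hi]
      | false => simp)

/-- One step of zero-LLR propagation, computing the stage-`t` zero-LLR set from the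
stage-`t+1` zero-LLR set `S`, for a polar code of length `2^n`. -/
def zstep (n t : ℕ) (S : Finset ℕ) : Finset ℕ :=
  (Finset.range (2 ^ n)).filter fun i =>
    if i.testBit t then i ∈ S ∧ i - 2 ^ t ∈ S else i ∈ S ∨ i + 2 ^ t ∈ S

/-- Zero-LLR set at stage `t` for puncturing set `X`, for a polar code of length `2^n`:
`Zstage n X n = X` and `Zstage n X t = zstep n t (Zstage n X (t+1))` for `t < n`. -/
def Zstage (n : ℕ) (X : Finset ℕ) (t : ℕ) : Finset ℕ :=
  if _h : n ≤ t then X else zstep n t (Zstage n X (t + 1))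
termination_by n - t
decreasing_by omega

/-- The incapable set resulting from puncturing set `X`. -/
def Up (n : ℕ) (X : Finset ℕ) : Finset ℕ := Zstage n X 0


lemma step_card (n s t ℓ : ℕ) (hst : s < t) (hend : (ℓ + 1) * 2 ^ t ≤ 2 ^ n) (S : Finset ℕ) :
    ((zstep n s S) ∩ Finset.Ico (ℓ * 2 ^ t) ((ℓ + 1) * 2 ^ t)).card
      = (S ∩ Finset.Ico (ℓ * 2 ^ t) ((ℓ + 1) * 2 ^ t)).card := by
  set P := 2 ^ s with hPdef
  have hP : 0 < P := Nat.pow_pos (by norm_num)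
  have hts : 2 ^ t = 2 ^ (t - s) * P := by
    rw [hPdef, ← pow_add, Nat.sub_add_cancel hst.le]
  set a' := ℓ * 2 ^ (t - s) with ha'
  set b' := (ℓ + 1) * 2 ^ (t - s) with hb'
  have hA : ℓ * 2 ^ t = a' * P := by rw [hts, ha', mul_assoc]
  have hB : (ℓ + 1) * 2 ^ t = b' * P := by rw [hts, hb', mul_assoc]
  have hpow2 : 2 ^ (t - s) = 2 ^ (t - s - 1) * 2 := by
    rw [← pow_succ]; congr 1; omega
  have ha2 : a' % 2 = 0 := by rw [ha', hpow2, ← mul_assoc]; simp [Nat.mul_mod_left]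
  have hb2 : b' % 2 = 0 := by rw [hb', hpow2, ← mul_assoc]; simp [Nat.mul_mod_left]
  have hdivle : ∀ x c : ℕ, c * P ≤ x ↔ c ≤ x / P := fun x c => (Nat.le_div_iff_mul_le hP).symm
  have hdivlt : ∀ x c : ℕ, x < c * P ↔ x / P < c := fun x c => (Nat.div_lt_iff_lt_mul hP).symm
  have hbit : ∀ x : ℕ, x.testBit s = true ↔ x / P % 2 = 1 := by
    intro x; rw [hPdef]; simp [Nat.testBit_eq_decide_div_mod_eq]
  have hmemI : ∀ x : ℕ, x ∈ Finset.Ico (ℓ * 2 ^ t) ((ℓ + 1) * 2 ^ t) ↔ a' ≤ x / P ∧ x / P < b' := by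
    intro x; rw [Finset.mem_Ico, hA, hB, hdivle, hdivlt]
  have hzmem : ∀ x : ℕ, x ∈ zstep n s S ↔ x < 2 ^ n ∧
      (if x.testBit s then x ∈ S ∧ x - P ∈ S else x ∈ S ∨ x + P ∈ S) := by
    intro x; simp [zstep, Finset.mem_filter, Finset.mem_range, hPdef]
  have hBn : b' * P ≤ 2 ^ n := hB ▸ hend
  have hselfdiv : ∀ x : ℕ, x / P * P ≤ x := fun x => Nat.div_mul_le_self x P
  have haddP : ∀ x : ℕ, (x + P) / P = x / P + 1 := fun x => Nat.add_div_right x hP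
  have hsubP : ∀ x : ℕ, P ≤ x → (x - P) / P = x / P - 1 := by
    intro x hx
    have h1 : (x - P) + P = x := by omega
    have h2 := haddP (x - P)
    rw [h1] at h2
    generalize (x - P) / P = q2 at h2 ⊢
    generalize x / P = q1 at h2 ⊢
    omega
  -- key facts
  have key1 : ∀ i, i ∈ zstep n s S → i ∈ Finset.Ico (ℓ * 2 ^ t) ((ℓ + 1) * 2 ^ t) → i ∉ S →
      i.testBit s = false ∧ i + P ∈ S ∧ (i + P) ∈ Finset.Ico (ℓ * 2 ^ t) ((ℓ + 1) * 2 ^ t)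
        ∧ (i + P).testBit s = true := by
    intro i hz hI hiS
    rw [hzmem] at hz
    have hbf : i.testBit s = false := by
      by_contra h
      rw [Bool.not_eq_false] at h
      rw [h, if_pos rfl] at hz
      exact hiS hz.2.1
    rw [hbf] at hz
    simp only [Bool.false_eq_true, if_false] at hz
    have hiPS : i + P ∈ S := hz.2.resolve_left hiS
    rw [hmemI] at hI
    have hq0 : i / P % 2 = 0 := by
      have hne : i / P % 2 ≠ 1 := fun h => by simp [(hbit i).mpr h] at hbf
      generalize i / P = q at hne ⊢
      omega
    have hbt : (i + P).testBit s = true := by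
      rw [hbit, haddP]
      generalize i / P = q at hq0 ⊢
      omega
    refine ⟨hbf, hiPS, ?_, hbt⟩
    rw [hmemI, haddP]
    generalize i / P = q at hI hq0 ⊢
    omega
  have key2 : ∀ j, j ∈ S → j ∈ Finset.Ico (ℓ * 2 ^ t) ((ℓ + 1) * 2 ^ t) → j ∉ zstep n s S →
      j.testBit s = true ∧ P ≤ j ∧ j - P ∉ S ∧ j - P ∈ zstep n s S
        ∧ (j - P) ∈ Finset.Ico (ℓ * 2 ^ t) ((ℓ + 1) * 2 ^ t) := by
    intro j hjS hI hz
    rw [hmemI] at hI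
    have hjn : j < 2 ^ n := by
      calc j < (j / P + 1) * P := (hdivlt j (j / P + 1)).mpr (Nat.lt_succ_self _)
        _ ≤ b' * P := Nat.mul_le_mul_right P (by omega)
        _ ≤ 2 ^ n := hBn
    have hbt : j.testBit s = true := by
      by_contra h
      rw [Bool.not_eq_true] at h
      exact hz ((hzmem j).mpr ⟨hjn, by rw [h]; simp [hjS]⟩)
    have hq1 : j / P % 2 = 1 := (hbit j).mp hbt
    have hPj : P ≤ j := by
      have h1 : 1 * P ≤ j / P * P := by
        apply Nat.mul_le_mul_right
        generalize j / P = q at hq1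
        omega
      have h2 := hselfdiv j
      omega
    have hjPS : j - P ∉ S := by
      intro h
      apply hz
      rw [hzmem]
      exact ⟨hjn, by rw [hbt]; simp [hjS, h]⟩
    have hsub : (j - P) / P = j / P - 1 := hsubP j hPj
    have hbf2 : (j - P).testBit s = false := by
      by_contra h
      rw [Bool.not_eq_false, hbit, hsub] at h
      generalize j / P = q at hq1 h
      omega
    have haddback : (j - P) + P = j := by omega
    have hzm : j - P ∈ zstep n s S := by
      rw [hzmem, hbf2]
      exact ⟨by omega, by simp [haddback, hjS]⟩
    refine ⟨hbt, hPj, hjPS, hzm, ?_⟩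
    rw [hmemI, hsub]
    generalize j / P = q at hI hq1 ⊢
    omega
  apply Finset.card_bij' (fun i _ => if i ∈ S then i else i + P)
      (fun j _ => if j ∈ zstep n s S then j else j - P)
  · intro a ha
    rw [Finset.mem_inter] at ha ⊢
    by_cases h : a ∈ S
    · simpa [h] using ha.2
    · obtain ⟨_, h2, h3, _⟩ := key1 a ha.1 ha.2 h
      simp [h, h2, h3]
  · intro a ha
    rw [Finset.mem_inter] at ha ⊢
    by_cases h : a ∈ zstep n s S
    · simpa [h] using ha.2
    · obtain ⟨_, _, _, h4, h5⟩ := key2 a ha.1 ha.2 h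
      simp [h, h4, h5]
  · intro a ha
    rw [Finset.mem_inter] at ha
    by_cases h : a ∈ S
    · simp [h, ha.1]
    · obtain ⟨hbf, h2, _, hbt⟩ := key1 a ha.1 ha.2 h
      have hnz : a + P ∉ zstep n s S := by
        rw [hzmem, hbt]
        simp only [if_pos]
        rintro ⟨-, -, hc⟩
        simp only [Nat.add_sub_cancel] at hc
        exact h hc
      simp [h, hnz]
  · intro a ha
    rw [Finset.mem_inter] at ha
    by_cases h : a ∈ zstep n s S
    · have haS : a ∈ S := ha.1
      simp [h, haS]
    · obtain ⟨_, hPa, h3, _, _⟩ := key2 a ha.1 ha.2 h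
      simp only [if_neg h, if_neg h3]
      omega

lemma Zstage_eq_of_lt (n : ℕ) (X : Finset ℕ) (s : ℕ) (h : s < n) :
    Zstage n X s = zstep n s (Zstage n X (s + 1)) := by
  rw [Zstage]; rw [dif_neg (by omega)]

lemma stage_eq_top (n t ℓ : ℕ) (htn : t ≤ n) (hend : (ℓ + 1) * 2 ^ t ≤ 2 ^ n) (X : Finset ℕ) :
    ∀ d s, s ≤ t → t - s = d →
      (Zstage n X s ∩ Finset.Ico (ℓ * 2 ^ t) ((ℓ + 1) * 2 ^ t)).card
        = (Zstage n X t ∩ Finset.Ico (ℓ * 2 ^ t) ((ℓ + 1) * 2 ^ t)).card := by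
  intro d
  induction d with
  | zero => intro s hs hd; have : s = t := by omega
            subst this; rfl
  | succ d ih =>
      intro s hs hd
      have hst : s < t := by omega
      rw [Zstage_eq_of_lt n X s (by omega),
        step_card n s t ℓ hst hend (Zstage n X (s + 1))]
      exact ih (s + 1) (by omega) (by omega)

/-- within any aligned block of size `2^t`, the number of zero-LLR
indices is the same at all stages `s, s' ≤ t`. -/
theorem block_zero_count_invariant (n : ℕ) (hn : 1 ≤ n)
    (X : Finset ℕ) (hX : X ⊆ Finset.range (2 ^ n))
    (t : ℕ) (ht : t ≤ n) (ℓ : ℕ) (hℓ : ℓ ≤ 2 ^ (n - t) - 1)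
    (s s' : ℕ) (hs : s ≤ t) (hs' : s' ≤ t) :
    (Zstage n X s ∩ Finset.Ico (ℓ * 2 ^ t) ((ℓ + 1) * 2 ^ t)).card
      = (Zstage n X s' ∩ Finset.Ico (ℓ * 2 ^ t) ((ℓ + 1) * 2 ^ t)).card := by
  have hend : (ℓ + 1) * 2 ^ t ≤ 2 ^ n := by
    have h1 : 1 ≤ 2 ^ (n - t) := Nat.one_le_two_pow
    have h2 : ℓ + 1 ≤ 2 ^ (n - t) := by omega
    calc (ℓ + 1) * 2 ^ t ≤ 2 ^ (n - t) * 2 ^ t := Nat.mul_le_mul_right _ h2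
      _ = 2 ^ n := by rw [← pow_add]; congr 1; omega
  rw [stage_eq_top n t ℓ ht hend X (t - s) s hs rfl,
    stage_eq_top n t ℓ ht hend X (t - s') s' hs' rfl]
end

section
/- For every n ≥ 1, every puncturing set X ⊆ {0,…,2^n−1}, and every stage t with 0 ≤ t ≤ n, the zero-LLR set at stage t has the same cardinality as the puncturing set: |Z_t(X)| = |X|. In particular, the incapable set satisfies |U_p(X)| = |X|, i.e., puncturing J encoder output bits makes exactly J encoder input bits incapable, regardless of the puncturing bit pattern. -/
lemma bit_false_add {i t : ℕ} (h : i.testBit t = false) :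
    (i + 2 ^ t).testBit t = true := by
  rw [Nat.add_comm, Nat.testBit_two_pow_add_eq, h]; rfl

lemma bit_true_ge {i t : ℕ} (h : i.testBit t = true) : 2 ^ t ≤ i :=
  Nat.ge_two_pow_of_testBit h

lemma bit_true_sub {i t : ℕ} (h : i.testBit t = true) :
    (i - 2 ^ t).testBit t = false := by
  have hge := bit_true_ge h
  have : i = 2 ^ t + (i - 2 ^ t) := by omega
  rw [this, Nat.testBit_two_pow_add_eq] at h
  cases hb : (i - 2 ^ t).testBit t
  · rfl
  · rw [hb] at h; simp at h

lemma add_lt_pow {i t n : ℕ} (ht : t < n) (hi : i < 2 ^ n)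
    (h : i.testBit t = false) : i + 2 ^ t < 2 ^ n := by
  set m := 2 ^ t with hm
  have hm0 : 0 < m := Nat.two_pow_pos t
  have hdm : i / m % 2 = 0 := by
    have := @Nat.testBit_eq_decide_div_mod_eq t i
    rw [h, ← hm] at this
    simpa using this.symm
  obtain ⟨q, hq⟩ : ∃ q, i / m = 2 * q := ⟨i / m / 2, by omega⟩
  have hr : i % m < m := Nat.mod_lt _ hm0
  have hi' : m * (2 * q) + i % m = i := by rw [← hq]; exact Nat.div_add_mod i m
  set M := 2 ^ (n - t - 1) with hM
  have h2n : 2 ^ n = m * (2 * M) :=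
    calc 2 ^ n = 2 ^ (t + ((n - t - 1) + 1)) := by congr 1; omega
    _ = 2 ^ t * 2 ^ ((n - t - 1) + 1) := pow_add 2 t _
    _ = m * (2 * M) := by rw [← hm, pow_succ, ← hM]; ring
  have hq2 : 2 * q < 2 * M := Nat.lt_of_mul_lt_mul_left (a := m) (by omega)
  have hmul : m * (2 * q + 2) ≤ m * (2 * M) := Nat.mul_le_mul_left m (by omega)
  have hexp : m * (2 * q + 2) = m * (2 * q) + 2 * m := by ring
  omega

lemma mem_zstep {n t : ℕ} {S : Finset ℕ} {i : ℕ} :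
    i ∈ zstep n t S ↔ i < 2 ^ n ∧
      (if i.testBit t then i ∈ S ∧ i - 2 ^ t ∈ S else i ∈ S ∨ i + 2 ^ t ∈ S) := by
  simp [zstep, Finset.mem_filter, Finset.mem_range]

lemma zstep_card (n t : ℕ) (ht : t < n) (S : Finset ℕ)
    (hS : S ⊆ Finset.range (2 ^ n)) : (zstep n t S).card = S.card := by
  classical
  apply Finset.card_bij (fun i _ => if i.testBit t then i else if i ∈ S then i else i + 2 ^ t)
  · intro a ha
    rw [mem_zstep] at ha
    by_cases hb : a.testBit t
    · rw [if_pos hb]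
      rw [if_pos hb] at ha
      exact ha.2.1
    · rw [if_neg hb]
      rw [if_neg hb] at ha
      by_cases haS : a ∈ S
      · rw [if_pos haS]; exact haS
      · rw [if_neg haS]
        rcases ha.2 with h | h
        · exact absurd h haS
        · exact h
  · intro a₁ ha₁ a₂ ha₂ heq
    rw [mem_zstep] at ha₁ ha₂
    by_cases hb₁ : a₁.testBit t <;> by_cases hb₂ : a₂.testBit t
    · rw [if_pos hb₁, if_pos hb₂] at heq
      exact heq
    · rw [if_pos hb₁, if_neg hb₂] at heq
      rw [if_pos hb₁] at ha₁
      by_cases h2S : a₂ ∈ S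
      · rw [if_pos h2S] at heq
        exact absurd (heq ▸ hb₁) hb₂
      · rw [if_neg h2S] at heq
        have hge := bit_true_ge hb₁
        exfalso
        apply h2S
        have h' : a₂ = a₁ - 2 ^ t := by omega
        rw [h']; exact ha₁.2.2
    · rw [if_neg hb₁, if_pos hb₂] at heq
      rw [if_pos hb₂] at ha₂
      by_cases h1S : a₁ ∈ S
      · rw [if_pos h1S] at heq
        exact absurd (heq ▸ hb₂) hb₁
      · rw [if_neg h1S] at heq
        have hge := bit_true_ge hb₂
        exfalso
        apply h1S
        have h' : a₁ = a₂ - 2 ^ t := by omega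
        rw [h']; exact ha₂.2.2
    · rw [if_neg hb₁, if_neg hb₂] at heq
      have hbb₁ : a₁.testBit t = false := by simpa using hb₁
      have hbb₂ : a₂.testBit t = false := by simpa using hb₂
      by_cases h1S : a₁ ∈ S <;> by_cases h2S : a₂ ∈ S
      · rw [if_pos h1S, if_pos h2S] at heq; exact heq
      · rw [if_pos h1S, if_neg h2S] at heq
        have := bit_false_add hbb₂
        rw [← heq] at this
        exact absurd this hb₁
      · rw [if_neg h1S, if_pos h2S] at heq
        have := bit_false_add hbb₁
        rw [heq] at this
        exact absurd this hb₂
      · rw [if_neg h1S, if_neg h2S] at heq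
        omega
  · intro b hb
    have hbn : b < 2 ^ n := Finset.mem_range.mp (hS hb)
    by_cases hbit : b.testBit t
    · by_cases hsub : b - 2 ^ t ∈ S
      · refine ⟨b, ?_, if_pos hbit⟩
        rw [mem_zstep, if_pos hbit]
        exact ⟨hbn, hb, hsub⟩
      · have hge := bit_true_ge hbit
        have hbit' : ¬((b - 2 ^ t).testBit t = true) := by
          simp [bit_true_sub hbit]
        have hadd : b - 2 ^ t + 2 ^ t = b := by omega
        refine ⟨b - 2 ^ t, ?_, ?_⟩
        · rw [mem_zstep, if_neg hbit']
          exact ⟨Nat.lt_of_le_of_lt (Nat.sub_le b (2 ^ t)) hbn, Or.inr (by rw [hadd]; exact hb)⟩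
        · rw [if_neg hbit', if_neg hsub, hadd]
    · refine ⟨b, ?_, ?_⟩
      · rw [mem_zstep, if_neg hbit]
        exact ⟨hbn, Or.inl hb⟩
      · rw [if_neg hbit, if_pos hb]

lemma Zstage_subset (n : ℕ) (X : Finset ℕ) (hX : X ⊆ Finset.range (2 ^ n)) :
    ∀ t, Zstage n X t ⊆ Finset.range (2 ^ n) := by
  intro t
  rw [Zstage]
  split
  · exact hX
  · exact Finset.filter_subset _ _

lemma Zstage_card (n : ℕ) (X : Finset ℕ) (hX : X ⊆ Finset.range (2 ^ n)) :
    ∀ t, t ≤ n → (Zstage n X t).card = X.card := by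
  have key : ∀ k t, t ≤ n → n - t ≤ k → (Zstage n X t).card = X.card := by
    intro k
    induction k with
    | zero =>
      intro t ht hk
      have : t = n := by omega
      rw [this, Zstage]; simp
    | succ k ih =>
      intro t ht hk
      rw [Zstage]
      split
      · rfl
      · rename_i h
        rw [zstep_card n t (by omega) _ (Zstage_subset n X hX (t + 1))]
        exact ih (t + 1) (by omega) (by omega)
  intro t ht
  exact key (n - t) t ht le_rfl

/-- the zero-LLR set at every stage `t ≤ n` has the same cardinality
as the puncturing set; in particular `|U_p(X)| = |X|`. -/
theorem zero_llr_card_eq_punct_card (n : ℕ) (hn : 1 ≤ n)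
    (X : Finset ℕ) (hX : X ⊆ Finset.range (2 ^ n)) :
    (∀ t ≤ n, (Zstage n X t).card = X.card) ∧ (Up n X).card = X.card := by
  refine ⟨Zstage_card n X hX, ?_⟩
  exact Zstage_card n X hX 0 (by omega)
end

section
/- For every n ≥ 1, every puncturing set X ⊆ {0,…,2^n−1}, every t with 0 ≤ t ≤ n−1, and every ℓ with 0 ≤ ℓ ≤ 2^{n−t−1}−1: Z_t(X) ∩ ((2ℓ+1)·2^t + {0,…,2^t−1}) ⊆ 2^t + (Z_t(X) ∩ (2ℓ·2^t + {0,…,2^t−1})). Equivalently, for every i in the block 2ℓ·2^t + {0,…,2^t−1} (so the t-th binary digit of i is 0), if i + 2^t ∈ Z_t(X) then i ∈ Z_t(X). -/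
/-- at any stage `t ≤ n-1`, the zero-LLR indices of the odd block
`(2ℓ+1)·2^t + {0,…,2^t−1}` are contained in `2^t +` (the zero-LLR indices of the
even block `2ℓ·2^t + {0,…,2^t−1}`). -/
theorem odd_block_zero_subset_even_block (n : ℕ) (hn : 1 ≤ n)
    (X : Finset ℕ) (hX : X ⊆ Finset.range (2 ^ n))
    (t : ℕ) (ht : t ≤ n - 1) (ℓ : ℕ) (hℓ : ℓ ≤ 2 ^ (n - t - 1) - 1) :
    Zstage n X t ∩ Finset.Ico ((2 * ℓ + 1) * 2 ^ t) ((2 * ℓ + 2) * 2 ^ t)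
      ⊆ (Zstage n X t ∩ Finset.Ico (2 * ℓ * 2 ^ t) ((2 * ℓ + 1) * 2 ^ t)).image
          (· + 2 ^ t) := by

  intro i hi
  simp only [Finset.mem_inter, Finset.mem_Ico] at hi
  obtain ⟨hiZ, h1, h2⟩ := hi
  have htn : t < n := by omega
  have hpow : 0 < 2 ^ t := Nat.pow_pos (by norm_num)
  have e1 : (2 * ℓ + 1) * 2 ^ t = 2 * ℓ * 2 ^ t + 2 ^ t := by ring
  have e2 : (2 * ℓ + 2) * 2 ^ t = 2 * ℓ * 2 ^ t + 2 ^ t + 2 ^ t := by ring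
  have hdiv : i / 2 ^ t = 2 * ℓ + 1 := by
    apply Nat.div_eq_of_lt_le
    · linarith [h1]
    · calc i < (2 * ℓ + 2) * 2 ^ t := h2
        _ = (2 * ℓ + 1 + 1) * 2 ^ t := by ring
  have hbit : i.testBit t = true := by
    rw [Nat.testBit_eq_decide_div_mod_eq, hdiv]
    simp [Nat.add_mul_mod_self_left]
  rw [Zstage, dif_neg (by omega : ¬ n ≤ t)] at hiZ
  simp only [zstep, Finset.mem_filter, Finset.mem_range, hbit, if_true] at hiZ
  obtain ⟨hiN, hS, hS'⟩ := hiZ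
  have hle : 2 ^ t ≤ i := by omega
  refine Finset.mem_image.mpr ⟨i - 2 ^ t, ?_, by omega⟩
  have hdiv' : (i - 2 ^ t) / 2 ^ t = 2 * ℓ := by
    apply Nat.div_eq_of_lt_le
    · omega
    · calc i - 2 ^ t < 2 * ℓ * 2 ^ t + 2 ^ t := by omega
        _ = (2 * ℓ + 1) * 2 ^ t := by ring
  have hbit' : (i - 2 ^ t).testBit t = false := by
    rw [Nat.testBit_eq_decide_div_mod_eq, hdiv']
    simp [Nat.mul_mod_right]
  refine Finset.mem_inter.mpr ⟨?_, Finset.mem_Ico.mpr ⟨by omega, by omega⟩⟩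
  rw [Zstage, dif_neg (by omega : ¬ n ≤ t)]
  simp only [zstep, Finset.mem_filter, Finset.mem_range, hbit', if_false]
  refine ⟨by omega, Or.inr ?_⟩
  have : i - 2 ^ t + 2 ^ t = i := by omega
  rw [this]
  exact hS
end

section
/- For every n ≥ 1, every stage t with 0 ≤ t ≤ n, every index i with 0 ≤ i < 2^t, and every puncturing set X ⊆ {0,…,2^n−1} with i ∉ Z_t(X), there exists a single index k with 0 ≤ k < 2^n and k ∉ X such that i ∈ Z_t(X ∪ {k}). That is, regardless of how the polar code is currently punctured, any variable node at stage t with index below 2^t whose LLR is nonzero can be made to have zero LLR by puncturing one additional encoder output bit. -/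
lemma mem_Zstage_of_mem (n : ℕ) (X : Finset ℕ) :
    ∀ d t, n = t + d → ∀ i, i < 2 ^ t → i ∈ X → i ∈ Zstage n X t := by
  intro d
  induction d with
  | zero =>
    intro t h i hi hX
    rw [Zstage, dif_pos (by omega)]
    exact hX
  | succ d ih =>
    intro t h i hi hX
    rw [Zstage, dif_neg (by omega : ¬ n ≤ t)]
    have hbit : i.testBit t = false := Nat.testBit_lt_two_pow hi
    simp only [zstep, Finset.mem_filter, Finset.mem_range, hbit, Bool.false_eq_true, if_false]
    refine ⟨lt_of_lt_of_le hi (Nat.pow_le_pow_right (by norm_num) (by omega)), Or.inl ?_⟩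
    have h2 : 2 ^ t < 2 ^ (t + 1) := Nat.pow_lt_pow_right (by norm_num) (by omega)
    exact ih (t + 1) (by omega) i (by omega) hX

/-- any stage-`t` variable node with index `i < 2^t` and nonzero LLR can be
made to have zero LLR by puncturing a single additional encoder output bit. -/
theorem single_extra_puncture_suffices (n : ℕ) (hn : 1 ≤ n)
    (t : ℕ) (ht : t ≤ n) (i : ℕ) (hi : i < 2 ^ t)
    (X : Finset ℕ) (hX : X ⊆ Finset.range (2 ^ n)) (hiZ : i ∉ Zstage n X t) :
    ∃ k, k < 2 ^ n ∧ k ∉ X ∧ i ∈ Zstage n (insert k X) t := by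
  refine ⟨i, lt_of_lt_of_le hi (Nat.pow_le_pow_right (by norm_num) ht), ?_, ?_⟩
  · intro hiX
    exact hiZ (mem_Zstage_of_mem n X (n - t) t (by omega) i hi hiX)
  · exact mem_Zstage_of_mem n (insert i X) (n - t) t (by omega) i hi (Finset.mem_insert_self i X)
end

section
/- For every n ≥ 1 and every puncturing set X ⊆ {0,…,2^n−1}, the incapable set U_p(X) is downward closed under binary domination: if j ∈ U_p(X) and i ⪯ j (with i < 2^n), then i ∈ U_p(X). Equivalently, for every j ∈ U_p(X), the dominated set D_j = {k < 2^n : k ⪯ j} satisfies D_j ⊆ U_p(X). -/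
lemma mod_lt_pow_of_testBit_false {i t : ℕ} (h : i.testBit t = false) :
    i % 2 ^ (t + 1) < 2 ^ t := by
  set m := i % 2 ^ (t + 1) with hm
  have h1 : m.testBit t = false := by
    simp [hm, Nat.testBit_mod_two_pow, h]
  have h2 : m < 2 ^ (t + 1) := Nat.mod_lt _ (Nat.two_pow_pos _)
  by_contra hc
  push_neg at hc
  have hd : m / 2 ^ t = 1 := by
    apply Nat.div_eq_of_lt_le
    · simpa using hc
    · calc m < 2 ^ (t+1) := h2
        _ = 2 * 2 ^ t := by ring
  rw [Nat.testBit_eq_decide_div_mod_eq, hd] at h1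
  simp at h1

lemma add_pow_eq_or {i t : ℕ} (h : i.testBit t = false) : i + 2 ^ t = i ||| 2 ^ t := by
  have hb : i % 2 ^ (t + 1) < 2 ^ t := mod_lt_pow_of_testBit_false h
  have hdec : i = 2 ^ (t + 1) * (i / 2 ^ (t + 1)) + i % 2 ^ (t + 1) := by
    exact (Nat.div_add_mod _ _).symm
  set a := i / 2 ^ (t + 1)
  set b := i % 2 ^ (t + 1)
  apply Nat.eq_of_testBit_eq
  intro s
  have hbs : b + 2 ^ t < 2 ^ (t + 1) := by
    have : (2:ℕ) ^ (t+1) = 2 ^ t + 2 ^ t := by ring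
    omega
  have h1 : (i + 2 ^ t).testBit s =
      if s < t + 1 then (b + 2 ^ t).testBit s else a.testBit (s - (t + 1)) := by
    rw [show i + 2 ^ t = 2 ^ (t+1) * a + (b + 2 ^ t) by omega]
    exact Nat.testBit_two_pow_mul_add a hbs s
  have h2 : i.testBit s = if s < t + 1 then b.testBit s else a.testBit (s - (t + 1)) := by
    conv_lhs => rw [hdec]
    exact Nat.testBit_two_pow_mul_add a (Nat.mod_lt _ (Nat.two_pow_pos _)) s
  rw [h1, Nat.testBit_or, h2, Nat.testBit_two_pow]
  rcases lt_trichotomy s t with hs | rfl | hs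
  · rw [if_pos (by omega), if_pos (by omega)]
    rw [Nat.add_comm b, Nat.testBit_two_pow_add_gt hs]
    simp [Nat.ne_of_gt hs]
  · rw [if_pos (by omega), if_pos (by omega)]
    rw [Nat.add_comm b, Nat.testBit_two_pow_add_eq, Nat.testBit_lt_two_pow hb]
    simp
  · rw [if_neg (by omega), if_neg (by omega)]
    simp [Nat.ne_of_lt hs]

lemma sub_pow_spec {i t : ℕ} (h : i.testBit t = true) :
    (i - 2 ^ t).testBit t = false ∧ (i - 2 ^ t) + 2 ^ t = i := by
  have hge : 2 ^ t ≤ i := Nat.ge_two_pow_of_testBit h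
  have hdec : i = 2 ^ (t + 1) * (i / 2 ^ (t + 1)) + i % 2 ^ (t + 1) := by
    exact (Nat.div_add_mod _ _).symm
  set a := i / 2 ^ (t + 1)
  set b := i % 2 ^ (t + 1)
  have hbt : b.testBit t = true := by
    simp [b, Nat.testBit_mod_two_pow, h]
  have hbge : 2 ^ t ≤ b := Nat.ge_two_pow_of_testBit hbt
  have hblt : b < 2 ^ (t + 1) := Nat.mod_lt _ (Nat.two_pow_pos _)
  constructor
  · have : i - 2 ^ t = 2 ^ (t + 1) * a + (b - 2 ^ t) := by omega
    rw [this, Nat.testBit_two_pow_mul_add a (by omega : b - 2^t < 2 ^ (t+1)) t,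
      if_pos (by omega)]
    apply Nat.testBit_lt_two_pow
    have : (2:ℕ) ^ (t+1) = 2 ^ t + 2 ^ t := by ring
    omega
  · omega

lemma sub_pow_testBit {i t s : ℕ} (h : i.testBit t = true) (hst : s ≠ t) :
    (i - 2 ^ t).testBit s = i.testBit s := by
  obtain ⟨h0, h1⟩ := sub_pow_spec h
  conv_rhs => rw [← h1]
  rw [add_pow_eq_or h0, Nat.testBit_or, Nat.testBit_two_pow]
  simp [Ne.symm hst]

lemma add_pow_testBit {i t s : ℕ} (h : i.testBit t = false) :
    (i + 2 ^ t).testBit s = (i.testBit s || decide (t = s)) := by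
  rw [add_pow_eq_or h, Nat.testBit_or, Nat.testBit_two_pow]

theorem Zstage_down (n : ℕ) (X : Finset ℕ) (hX : X ⊆ Finset.range (2 ^ n))
    (t i j : ℕ) (hi : i < 2 ^ n) (hd : bdom i j)
    (hlow : ∀ s, s < t → i.testBit s = j.testBit s)
    (hj : j ∈ Zstage n X t) : i ∈ Zstage n X t := by
  by_cases h : n ≤ t
  · rw [Zstage, dif_pos h] at hj ⊢
    have hjn : j < 2 ^ n := Finset.mem_range.mp (hX hj)
    have : i = j := by
      apply Nat.eq_of_testBit_eq
      intro s
      by_cases hs : s < t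
      · exact hlow s hs
      · have hns : n ≤ s := by omega
        have hpow : (2:ℕ) ^ n ≤ 2 ^ s := Nat.pow_le_pow_right (by norm_num) hns
        rw [Nat.testBit_lt_two_pow (by omega), Nat.testBit_lt_two_pow (by omega)]
    rwa [this]
  · rw [Zstage, dif_neg h] at hj ⊢
    rw [mem_zstep] at hj ⊢
    obtain ⟨hjn, hjc⟩ := hj
    refine ⟨hi, ?_⟩
    have htn : t < n := by omega
    cases hb : j.testBit t with
    | false =>
      have ha : i.testBit t = false := by
        cases hai : i.testBit t with
        | false => rfl
        | true => rw [hd t hai] at hb; exact hb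
      rw [hb] at hjc; rw [ha]
      simp only [if_neg Bool.false_ne_true] at hjc ⊢
      cases hjc with
      | inl hjc =>
        left
        exact Zstage_down n X hX (t+1) i j hi hd
          (fun s hs => by
            rcases Nat.lt_succ_iff_lt_or_eq.mp hs with h' | rfl
            · exact hlow s h'
            · rw [ha, hb]) hjc
      | inr hjc =>
        right
        have hin : i + 2 ^ t < 2 ^ n := by
          apply Nat.lt_pow_two_of_testBit
          intro s hs
          rw [add_pow_testBit ha, Nat.testBit_lt_two_pow (lt_of_lt_of_le hi
            (Nat.pow_le_pow_right (by norm_num) hs))]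
          simp; omega
        exact Zstage_down n X hX (t+1) (i + 2^t) (j + 2^t) hin
          (fun s hs => by
            rw [add_pow_testBit ha] at hs
            rw [add_pow_testBit hb]
            rcases Bool.or_eq_true_iff.mp hs with h' | h'
            · rw [hd s h']; simp
            · rw [h']; simp)
          (fun s hs => by
            rw [add_pow_testBit ha, add_pow_testBit hb]
            rcases Nat.lt_succ_iff_lt_or_eq.mp hs with h' | rfl
            · rw [hlow s h']
            · simp)
          hjc
    | true =>
      rw [hb] at hjc
      simp only [if_pos rfl] at hjc
      obtain ⟨hj1, hj2⟩ := hjc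
      obtain ⟨hjb0, hjadd⟩ := sub_pow_spec hb
      cases ha : i.testBit t with
      | true =>
        simp only [if_pos rfl]
        obtain ⟨hib0, hiadd⟩ := sub_pow_spec ha
        constructor
        · exact Zstage_down n X hX (t+1) i j hi hd
            (fun s hs => by
              rcases Nat.lt_succ_iff_lt_or_eq.mp hs with h' | rfl
              · exact hlow s h'
              · rw [ha, hb]) hj1
        · refine Zstage_down n X hX (t+1) (i - 2^t) (j - 2^t) (lt_of_le_of_lt (Nat.sub_le _ _) hi) ?_ ?_ hj2
          · intro s hs
            have hst : s ≠ t := by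
              intro e; rw [e, hib0] at hs; exact absurd hs (by simp)
            rw [sub_pow_testBit ha hst] at hs
            rw [sub_pow_testBit hb hst]
            exact hd s hs
          · intro s hs
            rcases Nat.lt_succ_iff_lt_or_eq.mp hs with h' | rfl
            · rw [sub_pow_testBit ha (by omega), sub_pow_testBit hb (by omega)]
              exact hlow s h'
            · rw [hib0, hjb0]
      | false =>
        simp only [if_neg Bool.false_ne_true]
        left
        refine Zstage_down n X hX (t+1) i (j - 2^t) hi ?_ ?_ hj2
        · intro s hs
          have hst : s ≠ t := by
            intro e; rw [e, ha] at hs; exact absurd hs (by simp)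
          rw [sub_pow_testBit hb hst]
          exact hd s hs
        · intro s hs
          rcases Nat.lt_succ_iff_lt_or_eq.mp hs with h' | rfl
          · rw [sub_pow_testBit hb (by omega)]
            exact hlow s h'
          · rw [ha, hjb0]
termination_by n - t
decreasing_by all_goals omega

/-- the incapable set is downward closed under binary domination. -/
theorem incapable_downward_closed (n : ℕ) (hn : 1 ≤ n)
    (X : Finset ℕ) (hX : X ⊆ Finset.range (2 ^ n))
    (j : ℕ) (hj : j ∈ Up n X) (i : ℕ) (hi : i < 2 ^ n) (hij : bdom i j) :
    i ∈ Up n X := by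
  exact Zstage_down n X hX 0 i j hi hij (fun s hs => by omega) hj
end

section
/- For every n ≥ 1 and every j < 2^n, the number of minimal puncturing bit patterns for j equals 2 raised to the power Σ_{t=0}^{n−1} (1 − j_t)·2^{d_H(j mod 2^t)}, where j_t is the t-th binary digit of j and d_H denotes the binary Hamming weight; that is, |ψ_j| = 2^{Σ_{t=0}^{n−1} (1 − j_t)·∏_{k=0}^{t−1} 2^{j_k}}. -/
/-- `psi n j Q`: `Q` is a minimal puncturing bit pattern making bit `j` incapable. -/
def psi (n j : ℕ) (Q : Finset ℕ) : Prop :=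
  Q ⊆ Finset.range (2 ^ n) ∧ j ∈ Up n Q ∧ ∀ Q' ⊂ Q, j ∉ Up n Q'

/-- Binary Hamming weight: the number of ones in the binary representation. -/
def hamw (j : ℕ) : ℕ := (Nat.bits j).count true

----------------------------------------------------------------

lemma Zstage_of_le {n t : ℕ} (X : Finset ℕ) (h : n ≤ t) : Zstage n X t = X := by
  rw [Zstage]; simp [h]

lemma Zstage_of_lt {n t : ℕ} (X : Finset ℕ) (h : t < n) :
    Zstage n X t = zstep n t (Zstage n X (t + 1)) := by
  rw [Zstage]; simp [Nat.not_le.2 h]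

def D0 (A : Finset ℕ) : Finset ℕ := A.image (fun a => 2 * a)
def D1 (A : Finset ℕ) : Finset ℕ := A.image (fun a => 2 * a + 1)
def E0 (X : Finset ℕ) : Finset ℕ := (X.filter (fun x => x % 2 = 0)).image (fun x => x / 2)
def E1 (X : Finset ℕ) : Finset ℕ := (X.filter (fun x => x % 2 = 1)).image (fun x => x / 2)

lemma mem_E0 {X : Finset ℕ} {i : ℕ} : i ∈ E0 X ↔ 2 * i ∈ X := by
  simp only [E0, Finset.mem_image, Finset.mem_filter]
  constructor
  · rintro ⟨x, ⟨hx, hp⟩, rfl⟩; have : 2 * (x / 2) = x := by omega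
    rwa [this]
  · intro h; exact ⟨2 * i, ⟨h, by omega⟩, by omega⟩

lemma mem_E1 {X : Finset ℕ} {i : ℕ} : i ∈ E1 X ↔ 2 * i + 1 ∈ X := by
  simp only [E1, Finset.mem_image, Finset.mem_filter]
  constructor
  · rintro ⟨x, ⟨hx, hp⟩, rfl⟩; have : 2 * (x / 2) + 1 = x := by omega
    rwa [this]
  · intro h; exact ⟨2 * i + 1, ⟨h, by omega⟩, by omega⟩

lemma mem_D0 {A : Finset ℕ} {x : ℕ} : x ∈ D0 A ↔ ∃ a ∈ A, x = 2 * a := by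
  simp [D0, Finset.mem_image, eq_comm]

lemma mem_D1 {A : Finset ℕ} {x : ℕ} : x ∈ D1 A ↔ ∃ a ∈ A, x = 2 * a + 1 := by
  simp [D1, Finset.mem_image, eq_comm]

lemma split_parity (Q : Finset ℕ) : Q = D0 (E0 Q) ∪ D1 (E1 Q) := by
  ext x
  simp only [Finset.mem_union, mem_D0, mem_D1]
  constructor
  · intro hx
    rcases Nat.even_or_odd x with ⟨k, hk⟩ | ⟨k, hk⟩
    · exact Or.inl ⟨k, mem_E0.2 (by rwa [show 2 * k = x by omega]), by omega⟩
    · exact Or.inr ⟨k, mem_E1.2 (by rwa [show 2 * k + 1 = x by omega]), by omega⟩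
  · rintro (⟨a, ha, rfl⟩ | ⟨a, ha, rfl⟩)
    · exact mem_E0.1 ha
    · exact mem_E1.1 ha

lemma E0_mono {X Y : Finset ℕ} (h : X ⊆ Y) : E0 X ⊆ E0 Y := fun i hi =>
  mem_E0.2 (h (mem_E0.1 hi))
lemma E1_mono {X Y : Finset ℕ} (h : X ⊆ Y) : E1 X ⊆ E1 Y := fun i hi =>
  mem_E1.2 (h (mem_E1.1 hi))

lemma E0_D0D1 (A B : Finset ℕ) : E0 (D0 A ∪ D1 B) = A := by
  ext i
  rw [mem_E0, Finset.mem_union, mem_D0, mem_D1]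
  constructor
  · rintro (⟨a, ha, h⟩ | ⟨a, ha, h⟩)
    · rwa [show a = i by omega] at ha
    · omega
  · intro h; exact Or.inl ⟨i, h, rfl⟩

lemma E1_D0D1 (A B : Finset ℕ) : E1 (D0 A ∪ D1 B) = B := by
  ext i
  rw [mem_E1, Finset.mem_union, mem_D0, mem_D1]
  constructor
  · rintro (⟨a, ha, h⟩ | ⟨a, ha, h⟩)
    · omega
    · rwa [show a = i by omega] at ha
  · intro h; exact Or.inr ⟨i, h, rfl⟩

lemma D1_empty : D1 (∅ : Finset ℕ) = ∅ := rfl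
lemma D0_empty : D0 (∅ : Finset ℕ) = ∅ := rfl

lemma E0_D0 (A : Finset ℕ) : E0 (D0 A) = A := by
  have := E0_D0D1 A ∅; rwa [D1_empty, Finset.union_empty] at this
lemma E1_D0 (A : Finset ℕ) : E1 (D0 A) = ∅ := by
  have := E1_D0D1 A ∅; rwa [D1_empty, Finset.union_empty] at this
lemma E0_D1 (B : Finset ℕ) : E0 (D1 B) = ∅ := by
  have := E0_D0D1 ∅ B; rwa [D0_empty, Finset.empty_union] at this
lemma E1_D1 (B : Finset ℕ) : E1 (D1 B) = B := by
  have := E1_D0D1 ∅ B; rwa [D0_empty, Finset.empty_union] at this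

lemma D0_injective : Function.Injective D0 := fun A B h => by
  rw [← E0_D0 A, h, E0_D0]
lemma D1_injective : Function.Injective D1 := fun A B h => by
  rw [← E1_D1 A, h, E1_D1]

lemma D0_mono {A B : Finset ℕ} (h : A ⊆ B) : D0 A ⊆ D0 B :=
  Finset.image_subset_image h
lemma D1_mono {A B : Finset ℕ} (h : A ⊆ B) : D1 A ⊆ D1 B :=
  Finset.image_subset_image h

lemma two_pow_succ' (t : ℕ) : 2 ^ (t + 1) = 2 * 2 ^ t := by rw [pow_succ]; ring

lemma zstep_parity_even {n t : ℕ} {S S' : Finset ℕ}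
    (hS : ∀ m, 2 * m ∈ S ↔ m ∈ S') (i : ℕ) :
    2 * i ∈ zstep (n + 1) (t + 1) S ↔ i ∈ zstep n t S' := by
  have hb : (2 * i).testBit (t + 1) = i.testBit t := by
    rw [Nat.testBit_add_one, show 2 * i / 2 = i by omega]
  have hp := two_pow_succ' t
  have hn := two_pow_succ' n
  rw [mem_zstep, mem_zstep, hb]
  apply and_congr (by omega)
  by_cases h : i.testBit t
  · rw [if_pos h, if_pos h, hp, show 2 * i - 2 * 2 ^ t = 2 * (i - 2 ^ t) by omega,
      hS, hS]
  · rw [if_neg h, if_neg h, hp, show 2 * i + 2 * 2 ^ t = 2 * (i + 2 ^ t) by omega,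
      hS, hS]

lemma zstep_parity_odd {n t : ℕ} {S S' : Finset ℕ}
    (hS : ∀ m, 2 * m + 1 ∈ S ↔ m ∈ S') (i : ℕ) :
    2 * i + 1 ∈ zstep (n + 1) (t + 1) S ↔ i ∈ zstep n t S' := by
  have hb : (2 * i + 1).testBit (t + 1) = i.testBit t := by
    rw [Nat.testBit_add_one, show (2 * i + 1) / 2 = i by omega]
  have hp := two_pow_succ' t
  have hn := two_pow_succ' n
  rw [mem_zstep, mem_zstep, hb]
  apply and_congr (by omega)
  by_cases h : i.testBit t
  · have hge : 2 ^ t ≤ i := Nat.ge_two_pow_of_testBit h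
    rw [if_pos h, if_pos h, hp,
      show 2 * i + 1 - 2 * 2 ^ t = 2 * (i - 2 ^ t) + 1 by omega, hS, hS]
  · rw [if_neg h, if_neg h, hp,
      show 2 * i + 1 + 2 * 2 ^ t = 2 * (i + 2 ^ t) + 1 by omega, hS, hS]

lemma stage_parity (n : ℕ) (X : Finset ℕ) :
    ∀ k t, k + t = n → ∀ i,
      (2 * i ∈ Zstage (n + 1) X (t + 1) ↔ i ∈ Zstage n (E0 X) t) ∧
      (2 * i + 1 ∈ Zstage (n + 1) X (t + 1) ↔ i ∈ Zstage n (E1 X) t) := by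
  intro k
  induction k with
  | zero =>
    intro t ht i
    obtain rfl : t = n := by omega
    rw [Zstage_of_le X (by omega), Zstage_of_le (E0 X) le_rfl,
      Zstage_of_le (E1 X) le_rfl]
    exact ⟨mem_E0.symm, mem_E1.symm⟩
  | succ k ih =>
    intro t ht i
    have h1 : t < n := by omega
    have ih' := ih (t + 1) (by omega)
    rw [Zstage_of_lt X (by omega), Zstage_of_lt (E0 X) h1, Zstage_of_lt (E1 X) h1]
    exact ⟨zstep_parity_even (fun m => (ih' m).1) i,
           zstep_parity_odd (fun m => (ih' m).2) i⟩

lemma up_even {n : ℕ} (X : Finset ℕ) {i : ℕ} (hi : i < 2 ^ n) :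
    2 * i ∈ Up (n + 1) X ↔ (i ∈ Up n (E0 X) ∨ i ∈ Up n (E1 X)) := by
  have hsp := stage_parity n X n 0 (by omega)
  rw [Up, Zstage_of_lt X (by omega), mem_zstep]
  have hb : (2 * i).testBit 0 = false := by
    rw [Nat.testBit_zero, decide_eq_false_iff_not]; omega
  rw [hb]
  have hn := two_pow_succ' n
  simp only [Bool.false_eq_true, if_false, pow_zero]
  rw [show (2 * i + 1 : ℕ) = 2 * i + 1 from rfl, (hsp i).1, (hsp i).2]
  constructor
  · rintro ⟨-, h⟩; exact h
  · intro h; exact ⟨by omega, h⟩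

lemma up_odd {n : ℕ} (X : Finset ℕ) {i : ℕ} (hi : i < 2 ^ n) :
    2 * i + 1 ∈ Up (n + 1) X ↔ (i ∈ Up n (E0 X) ∧ i ∈ Up n (E1 X)) := by
  have hsp := stage_parity n X n 0 (by omega)
  rw [Up, Zstage_of_lt X (by omega), mem_zstep]
  have hb : (2 * i + 1).testBit 0 = true := by
    rw [Nat.testBit_zero, decide_eq_true_eq]; omega
  rw [hb, if_pos rfl]
  have hn := two_pow_succ' n
  rw [show 2 * i + 1 - 2 ^ 0 = 2 * i by simp, (hsp i).1, (hsp i).2]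
  constructor
  · rintro ⟨-, h1, h2⟩; exact ⟨h2, h1⟩
  · rintro ⟨h1, h2⟩; exact ⟨by omega, h2, h1⟩

lemma zstep_empty (n t : ℕ) : zstep n t ∅ = ∅ := by
  ext i; simp [mem_zstep]

lemma Zstage_empty (n : ℕ) : ∀ k t, n ≤ k + t → Zstage n ∅ t = ∅ := by
  intro k
  induction k with
  | zero => intro t ht; exact Zstage_of_le ∅ (by omega)
  | succ k ih =>
    intro t ht
    by_cases h : n ≤ t
    · exact Zstage_of_le ∅ h
    · rw [Zstage_of_lt ∅ (by omega), ih (t + 1) (by omega), zstep_empty]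

lemma Up_empty (n : ℕ) : Up n ∅ = ∅ := Zstage_empty n n 0 (by omega)

lemma psi_nonempty {n j : ℕ} {Q : Finset ℕ} (h : psi n j Q) : Q.Nonempty := by
  rcases Q.eq_empty_or_nonempty with rfl | h'
  · exact absurd h.2.1 (by rw [Up_empty]; simp)
  · exact h'

lemma D0_subset_range {n : ℕ} {A : Finset ℕ} (hA : A ⊆ Finset.range (2 ^ n)) :
    D0 A ⊆ Finset.range (2 ^ (n + 1)) := by
  intro x hx
  have hn := two_pow_succ' n
  obtain ⟨a, ha, rfl⟩ := mem_D0.1 hx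
  have := Finset.mem_range.1 (hA ha)
  rw [Finset.mem_range]; omega

lemma D1_subset_range {n : ℕ} {A : Finset ℕ} (hA : A ⊆ Finset.range (2 ^ n)) :
    D1 A ⊆ Finset.range (2 ^ (n + 1)) := by
  intro x hx
  have hn := two_pow_succ' n
  obtain ⟨a, ha, rfl⟩ := mem_D1.1 hx
  have := Finset.mem_range.1 (hA ha)
  rw [Finset.mem_range]; omega

lemma psi_odd {n : ℕ} (i : ℕ) (hi : i < 2 ^ n) (Q : Finset ℕ) :
    psi (n + 1) (2 * i + 1) Q ↔
      ∃ A B, psi n i A ∧ psi n i B ∧ Q = D0 A ∪ D1 B := by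
  constructor
  · rintro ⟨hQr, hQu, hQm⟩
    obtain ⟨hA, hB⟩ := (up_odd Q hi).1 hQu
    have hAr : E0 Q ⊆ Finset.range (2 ^ n) := by
      intro m hm
      have := Finset.mem_range.1 (hQr (mem_E0.1 hm))
      have hn := two_pow_succ' n
      rw [Finset.mem_range]; omega
    have hBr : E1 Q ⊆ Finset.range (2 ^ n) := by
      intro m hm
      have := Finset.mem_range.1 (hQr (mem_E1.1 hm))
      have hn := two_pow_succ' n
      rw [Finset.mem_range]; omega
    refine ⟨E0 Q, E1 Q, ⟨hAr, hA, ?_⟩, ⟨hBr, hB, ?_⟩, split_parity Q⟩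
    · intro A' hA' hu
      have hQ' : D0 A' ∪ D1 (E1 Q) ⊂ Q := by
        constructor
        · conv_rhs => rw [split_parity Q]
          exact Finset.union_subset_union (D0_mono hA'.1) le_rfl
        · intro hsub
          obtain ⟨a, haA, haA'⟩ := Finset.exists_of_ssubset hA'
          have h2a : 2 * a ∈ Q := by rw [split_parity Q]; exact Finset.mem_union_left _ (mem_D0.2 ⟨a, haA, rfl⟩)
          rcases Finset.mem_union.1 (hsub h2a) with h | h
          · obtain ⟨b, hb, hab⟩ := mem_D0.1 h
            exact haA' (by rwa [show a = b by omega])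
          · obtain ⟨b, hb, hab⟩ := mem_D1.1 h; omega
      exact hQm _ hQ' ((up_odd _ hi).2 (by rw [E0_D0D1, E1_D0D1]; exact ⟨hu, hB⟩))
    · intro B' hB' hu
      have hQ' : D0 (E0 Q) ∪ D1 B' ⊂ Q := by
        constructor
        · conv_rhs => rw [split_parity Q]
          exact Finset.union_subset_union le_rfl (D1_mono hB'.1)
        · intro hsub
          obtain ⟨a, haA, haA'⟩ := Finset.exists_of_ssubset hB'
          have h2a : 2 * a + 1 ∈ Q := by rw [split_parity Q]; exact Finset.mem_union_right _ (mem_D1.2 ⟨a, haA, rfl⟩)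
          rcases Finset.mem_union.1 (hsub h2a) with h | h
          · obtain ⟨b, hb, hab⟩ := mem_D0.1 h; omega
          · obtain ⟨b, hb, hab⟩ := mem_D1.1 h
            exact haA' (by rwa [show a = b by omega])
      exact hQm _ hQ' ((up_odd _ hi).2 (by rw [E0_D0D1, E1_D0D1]; exact ⟨hA, hu⟩))
  · rintro ⟨A, B, hA, hB, rfl⟩
    refine ⟨Finset.union_subset (D0_subset_range hA.1) (D1_subset_range hB.1), (up_odd _ hi).2 (by rw [E0_D0D1, E1_D0D1]; exact ⟨hA.2.1, hB.2.1⟩), ?_⟩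
    intro Q' hQ' hu
    obtain ⟨hu0, hu1⟩ := (up_odd _ hi).1 hu
    have hsA : E0 Q' ⊆ A := by have := E0_mono hQ'.1; rwa [E0_D0D1] at this
    have hsB : E1 Q' ⊆ B := by have := E1_mono hQ'.1; rwa [E1_D0D1] at this
    by_cases hAe : E0 Q' = A
    · have hBne : E1 Q' ≠ B := by
        intro hBe
        have : Q' = D0 A ∪ D1 B := by rw [split_parity Q', hAe, hBe]
        exact (Finset.ssubset_iff_subset_ne.1 hQ').2 this
      exact hB.2.2 (E1 Q') (Finset.ssubset_iff_subset_ne.2 ⟨hsB, hBne⟩) hu1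
    · exact hA.2.2 (E0 Q') (Finset.ssubset_iff_subset_ne.2 ⟨hsA, hAe⟩) hu0

lemma psi_even {n : ℕ} (i : ℕ) (hi : i < 2 ^ n) (Q : Finset ℕ) :
    psi (n + 1) (2 * i) Q ↔
      ∃ A, psi n i A ∧ (Q = D0 A ∨ Q = D1 A) := by
  constructor
  · rintro ⟨hQr, hQu, hQm⟩
    have hAr : E0 Q ⊆ Finset.range (2 ^ n) := by
      intro m hm
      have := Finset.mem_range.1 (hQr (mem_E0.1 hm))
      have hn := two_pow_succ' n
      rw [Finset.mem_range]; omega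
    have hBr : E1 Q ⊆ Finset.range (2 ^ n) := by
      intro m hm
      have := Finset.mem_range.1 (hQr (mem_E1.1 hm))
      have hn := two_pow_succ' n
      rw [Finset.mem_range]; omega
    rcases (up_even Q hi).1 hQu with hu | hu
    · -- Q is all even: E1 Q = ∅
      have hE1 : E1 Q = ∅ := by
        by_contra hne
        obtain ⟨b, hb⟩ := Finset.nonempty_iff_ne_empty.2 hne
        have hQ' : D0 (E0 Q) ⊂ Q := by
          constructor
          · conv_rhs => rw [split_parity Q]
            exact Finset.subset_union_left
          · intro hsub
            have h2b : 2 * b + 1 ∈ Q := mem_E1.1 hb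
            obtain ⟨a, ha, hab⟩ := mem_D0.1 (hsub h2b); omega
        exact hQm _ hQ' ((up_even _ hi).2 (Or.inl (by rwa [E0_D0])))
      have hQeq : Q = D0 (E0 Q) := by
        conv_lhs => rw [split_parity Q]
        rw [hE1, D1_empty, Finset.union_empty]
      refine ⟨E0 Q, ⟨hAr, hu, ?_⟩, Or.inl hQeq⟩
      intro A' hA' hu'
      have hQ' : D0 A' ⊂ Q := by
        rw [hQeq]
        exact ⟨D0_mono hA'.1, fun hsub => (Finset.ssubset_iff_subset_ne.1 hA').2
          (D0_injective (le_antisymm (D0_mono hA'.1) hsub) ▸ rfl)⟩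
      exact hQm _ hQ' ((up_even _ hi).2 (Or.inl (by rwa [E0_D0])))
    · have hE0 : E0 Q = ∅ := by
        by_contra hne
        obtain ⟨b, hb⟩ := Finset.nonempty_iff_ne_empty.2 hne
        have hQ' : D1 (E1 Q) ⊂ Q := by
          constructor
          · conv_rhs => rw [split_parity Q]
            exact Finset.subset_union_right
          · intro hsub
            have h2b : 2 * b ∈ Q := mem_E0.1 hb
            obtain ⟨a, ha, hab⟩ := mem_D1.1 (hsub h2b); omega
        exact hQm _ hQ' ((up_even _ hi).2 (Or.inr (by rwa [E1_D1])))
      have hQeq : Q = D1 (E1 Q) := by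
        conv_lhs => rw [split_parity Q]
        rw [hE0, D0_empty, Finset.empty_union]
      refine ⟨E1 Q, ⟨hBr, hu, ?_⟩, Or.inr hQeq⟩
      intro B' hB' hu'
      have hQ' : D1 B' ⊂ Q := by
        rw [hQeq]
        exact ⟨D1_mono hB'.1, fun hsub => (Finset.ssubset_iff_subset_ne.1 hB').2
          (D1_injective (le_antisymm (D1_mono hB'.1) hsub) ▸ rfl)⟩
      exact hQm _ hQ' ((up_even _ hi).2 (Or.inr (by rwa [E1_D1])))
  · rintro ⟨A, hA, rfl | rfl⟩
    · refine ⟨D0_subset_range hA.1,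
        (up_even _ hi).2 (Or.inl (by rw [E0_D0]; exact hA.2.1)), ?_⟩
      intro Q' hQ' hu
      have hQeq : Q' = D0 (E0 Q') := by
        conv_lhs => rw [split_parity Q']
        have hE1 : E1 Q' = ∅ := by
          have h := E1_mono hQ'.1; rw [E1_D0] at h
          exact Finset.subset_empty.1 h
        rw [hE1, D1_empty, Finset.union_empty]
      rcases (up_even _ hi).1 hu with hu' | hu'
      · have hsA : E0 Q' ⊂ A := by
          have hs := E0_mono hQ'.1; rw [E0_D0] at hs
          refine Finset.ssubset_iff_subset_ne.2 ⟨hs, fun he => ?_⟩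
          exact (Finset.ssubset_iff_subset_ne.1 hQ').2 (by rw [hQeq, he])
        exact hA.2.2 _ hsA hu'
      · have hE1 : E1 Q' = ∅ := by
          have h := E1_mono hQ'.1; rw [E1_D0] at h
          exact Finset.subset_empty.1 h
        rw [hE1, Up_empty] at hu'; simp at hu'
    · refine ⟨D1_subset_range hA.1,
        (up_even _ hi).2 (Or.inr (by rw [E1_D1]; exact hA.2.1)), ?_⟩
      intro Q' hQ' hu
      have hQeq : Q' = D1 (E1 Q') := by
        conv_lhs => rw [split_parity Q']
        have hE0 : E0 Q' = ∅ := by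
          have h := E0_mono hQ'.1; rw [E0_D1] at h
          exact Finset.subset_empty.1 h
        rw [hE0, D0_empty, Finset.empty_union]
      rcases (up_even _ hi).1 hu with hu' | hu'
      · have hE0 : E0 Q' = ∅ := by
          have h := E0_mono hQ'.1; rw [E0_D1] at h
          exact Finset.subset_empty.1 h
        rw [hE0, Up_empty] at hu'; simp at hu'
      · have hsB : E1 Q' ⊂ A := by
          have hs := E1_mono hQ'.1; rw [E1_D1] at hs
          refine Finset.ssubset_iff_subset_ne.2 ⟨hs, fun he => ?_⟩
          exact (Finset.ssubset_iff_subset_ne.1 hQ').2 (by rw [hQeq, he])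
        exact hA.2.2 _ hsB hu'

lemma hamw_zero : hamw 0 = 0 := by simp [hamw]

lemma hamw_two_mul (m : ℕ) : hamw (2 * m) = hamw m := by
  rcases Nat.eq_zero_or_pos m with rfl | hm
  · rfl
  · rw [hamw, hamw, Nat.bit0_bits m (by omega)]
    simp [List.count_cons]

lemma hamw_two_mul_add_one (m : ℕ) : hamw (2 * m + 1) = hamw m + 1 := by
  rw [hamw, hamw, Nat.bit1_bits m]
  simp [List.count_cons]

lemma mod_pow_even (i t : ℕ) : (2 * i) % 2 ^ (t + 1) = 2 * (i % 2 ^ t) := by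
  rw [two_pow_succ' t, Nat.mul_mod_mul_left]

lemma mod_pow_odd (i t : ℕ) : (2 * i + 1) % 2 ^ (t + 1) = 2 * (i % 2 ^ t) + 1 := by
  have hdm := Nat.div_add_mod i (2 ^ t)
  have hlt : i % 2 ^ t < 2 ^ t := Nat.mod_lt _ (Nat.two_pow_pos t)
  have h1 : 2 * i + 1 = 2 * (i % 2 ^ t) + 1 + 2 ^ (t + 1) * (i / 2 ^ t) := by
    rw [two_pow_succ' t]; nlinarith [hdm]
  rw [h1, Nat.add_mul_mod_self_left, Nat.mod_eq_of_lt (by rw [two_pow_succ' t]; omega)]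

def expo (n j : ℕ) : ℕ :=
  ∑ t ∈ Finset.range n, (1 - (if j.testBit t then 1 else 0)) * 2 ^ hamw (j % 2 ^ t)

lemma testBit0_even (i : ℕ) : (2 * i).testBit 0 = false := by
  rw [Nat.testBit_zero, decide_eq_false_iff_not]; omega

lemma testBit0_odd (i : ℕ) : (2 * i + 1).testBit 0 = true := by
  rw [Nat.testBit_zero, decide_eq_true_eq]; omega

lemma testBit_succ_even (i t : ℕ) : (2 * i).testBit (t + 1) = i.testBit t := by
  rw [Nat.testBit_add_one, show 2 * i / 2 = i by omega]

lemma testBit_succ_odd (i t : ℕ) : (2 * i + 1).testBit (t + 1) = i.testBit t := by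
  rw [Nat.testBit_add_one, show (2 * i + 1) / 2 = i by omega]

lemma expo_odd (n i : ℕ) : expo (n + 1) (2 * i + 1) = 2 * expo n i := by
  rw [expo, expo, Finset.sum_range_succ', Finset.mul_sum]
  have h0 : (1 - (if (2 * i + 1).testBit 0 then 1 else 0)) * 2 ^ hamw ((2 * i + 1) % 2 ^ 0) = 0 := by
    rw [testBit0_odd]; simp
  rw [h0, add_zero]
  apply Finset.sum_congr rfl
  intro t _
  rw [testBit_succ_odd, mod_pow_odd, hamw_two_mul_add_one, pow_succ]
  ring

lemma expo_even (n i : ℕ) : expo (n + 1) (2 * i) = expo n i + 1 := by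
  rw [expo, expo, Finset.sum_range_succ']
  have h0 : (1 - (if (2 * i).testBit 0 then 1 else 0)) * 2 ^ hamw ((2 * i) % 2 ^ 0) = 1 := by
    rw [testBit0_even]; simp [hamw_zero, Nat.mod_one]
  rw [h0]
  congr 1
  apply Finset.sum_congr rfl
  intro t _
  rw [testBit_succ_even, mod_pow_even, hamw_two_mul]

lemma psi_finite (n j : ℕ) : {Q : Finset ℕ | psi n j Q}.Finite := by
  apply Set.Finite.subset (Finset.finite_toSet ((Finset.range (2 ^ n)).powerset))
  intro Q hQ
  exact Finset.mem_coe.2 (Finset.mem_powerset.2 hQ.1)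

lemma ncard_prod_set {α : Type*} (s t : Set α) : (s ×ˢ t).ncard = s.ncard * t.ncard := by
  rw [← Nat.card_coe_set_eq, ← Nat.card_coe_set_eq, ← Nat.card_coe_set_eq,
    Nat.card_congr (Equiv.Set.prod s t), Nat.card_prod]

lemma key (n : ℕ) : ∀ j, j < 2 ^ n → {Q : Finset ℕ | psi n j Q}.ncard = 2 ^ expo n j := by
  induction n with
  | zero =>
    intro j hj
    obtain rfl : j = 0 := by simpa using hj
    have hset : {Q : Finset ℕ | psi 0 0 Q} = {({0} : Finset ℕ)} := by
      ext Q
      simp only [Set.mem_setOf_eq, Set.mem_singleton_iff]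
      constructor
      · rintro ⟨hr, hu, hm⟩
        rw [Up, Zstage_of_le Q le_rfl] at hu
        have : Q ⊆ {0} := by simpa [Finset.range_one] using hr
        rcases Finset.subset_singleton_iff.1 this with rfl | rfl
        · simp at hu
        · rfl
      · rintro rfl
        refine ⟨by simp [Finset.range_one], ?_, ?_⟩
        · rw [Up, Zstage_of_le _ le_rfl]; simp
        · intro Q' hQ' hu
          rw [Up, Zstage_of_le _ le_rfl] at hu
          rw [Finset.ssubset_singleton_iff.1 hQ'] at hu
          simp at hu
    rw [hset, Set.ncard_singleton, expo]
    simp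
  | succ n ih =>
    intro j hj
    have hn2 := two_pow_succ' n
    rcases Nat.even_or_odd j with ⟨i, hi⟩ | ⟨i, hi⟩
    · -- even
      obtain rfl : j = 2 * i := by omega
      have hi' : i < 2 ^ n := by omega
      have hset : {Q : Finset ℕ | psi (n + 1) (2 * i) Q}
          = D0 '' {Q | psi n i Q} ∪ D1 '' {Q | psi n i Q} := by
        ext Q
        simp only [Set.mem_setOf_eq, Set.mem_union, Set.mem_image]
        rw [psi_even i hi']
        constructor
        · rintro ⟨A, hA, rfl | rfl⟩
          · exact Or.inl ⟨A, hA, rfl⟩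
          · exact Or.inr ⟨A, hA, rfl⟩
        · rintro (⟨A, hA, rfl⟩ | ⟨A, hA, rfl⟩)
          · exact ⟨A, hA, Or.inl rfl⟩
          · exact ⟨A, hA, Or.inr rfl⟩
      have hdisj : Disjoint (D0 '' {Q | psi n i Q}) (D1 '' {Q | psi n i Q}) := by
        rw [Set.disjoint_left]
        rintro x ⟨A, hA, rfl⟩ ⟨B, hB, hBe⟩
        obtain ⟨a, ha⟩ := psi_nonempty hA
        have h1 : 2 * a ∈ D1 B := by rw [hBe]; exact mem_D0.2 ⟨a, ha, rfl⟩
        obtain ⟨b, hb, hab⟩ := mem_D1.1 h1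
        omega
      rw [hset, Set.ncard_union_eq hdisj ((psi_finite n i).image _) ((psi_finite n i).image _),
        Set.ncard_image_of_injective _ D0_injective,
        Set.ncard_image_of_injective _ D1_injective,
        ih i hi', expo_even]
      ring
    · -- odd
      obtain rfl : j = 2 * i + 1 := by omega
      have hi' : i < 2 ^ n := by omega
      have hset : {Q : Finset ℕ | psi (n + 1) (2 * i + 1) Q}
          = (fun p : Finset ℕ × Finset ℕ => D0 p.1 ∪ D1 p.2) ''
              ({Q | psi n i Q} ×ˢ {Q | psi n i Q}) := by
        ext Q
        simp only [Set.mem_setOf_eq, Set.mem_image, Set.mem_prod]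
        rw [psi_odd i hi']
        constructor
        · rintro ⟨A, B, hA, hB, rfl⟩
          exact ⟨(A, B), ⟨hA, hB⟩, rfl⟩
        · rintro ⟨⟨A, B⟩, ⟨hA, hB⟩, rfl⟩
          exact ⟨A, B, hA, hB, rfl⟩
      have hinj : Function.Injective (fun p : Finset ℕ × Finset ℕ => D0 p.1 ∪ D1 p.2) := by
        rintro ⟨A, B⟩ ⟨A', B'⟩ h
        simp only at h
        have h0 : A = A' := by
          have := congrArg E0 h; rwa [E0_D0D1, E0_D0D1] at this
        have h1 : B = B' := by
          have := congrArg E1 h; rwa [E1_D0D1, E1_D0D1] at this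
        simp [h0, h1]
      rw [hset, Set.ncard_image_of_injective _ hinj, ncard_prod_set, ih i hi',
        expo_odd, ← pow_add]
      ring_nf


/-- the number of minimal puncturing bit patterns for `j` equals
`2^{Σ_{t<n} (1 − j_t)·2^{d_H(j mod 2^t)}}`. -/
theorem minimal_pattern_count (n : ℕ) (hn : 1 ≤ n) (j : ℕ) (hj : j < 2 ^ n) :
    {Q : Finset ℕ | psi n j Q}.ncard
      = 2 ^ (∑ t ∈ Finset.range n,
          (1 - (if j.testBit t then 1 else 0)) * 2 ^ hamw (j % 2 ^ t)) := by
  exact key n j hj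
end

section
/- For every n ≥ 1 and every puncturing set X ⊆ {0,…,2^n−1} that is downward closed under binary domination (j ∈ X and i ⪯ j imply i ∈ X), the puncturing pattern is identical to the resulting incapable bit pattern: U_p(X) = X. -/
lemma bdom_sub {t i : ℕ} (h : i.testBit t = true) : bdom (i - 2 ^ t) i := by
  intro s hs
  set r := i % 2 ^ (t + 1) with hr
  set q := i / 2 ^ (t + 1) with hq
  have hdecomp : i = 2 ^ (t + 1) * q + r := (Nat.div_add_mod i (2 ^ (t + 1))).symm
  have hrlt : r < 2 ^ (t + 1) := Nat.mod_lt _ (Nat.two_pow_pos _)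
  have hrt : r.testBit t = true := by
    rw [hr, Nat.testBit_mod_two_pow]
    simp [h]
  have hrge : 2 ^ t ≤ r := Nat.ge_two_pow_of_testBit hrt
  have hblt : r - 2 ^ t < 2 ^ t := by
    have : 2 ^ (t + 1) = 2 ^ t * 2 := by ring
    omega
  have hsub : i - 2 ^ t = 2 ^ (t + 1) * q + (r - 2 ^ t) := by omega
  have hblt' : r - 2 ^ t < 2 ^ (t + 1) := by
    have : 2 ^ t ≤ 2 ^ (t + 1) := Nat.pow_le_pow_right (by norm_num) (by omega)
    omega
  rw [hsub, Nat.testBit_two_pow_mul_add _ hblt'] at hs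
  rw [hdecomp, Nat.testBit_two_pow_mul_add _ hrlt]
  by_cases hcase : s < t + 1
  · simp only [hcase, if_true] at hs ⊢
    rcases Nat.lt_or_ge s t with hst | hst
    · -- r = 2^t * 1 + (r - 2^t)
      have hrdec : r = 2 ^ t * 1 + (r - 2 ^ t) := by omega
      rw [hrdec, Nat.testBit_two_pow_mul_add _ hblt]
      simp only [hst, if_true]
      exact hs
    · have hst' : s = t := by omega
      subst hst'
      exact absurd hs (by simp [Nat.testBit_lt_two_pow hblt])
  · simp only [hcase, if_false] at hs ⊢
    exact hs

lemma bdom_add {t i : ℕ} (h : i.testBit t = false) : bdom i (i + 2 ^ t) := by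
  intro s hs
  set r := i % 2 ^ (t + 1) with hr
  set q := i / 2 ^ (t + 1) with hq
  have hdecomp : i = 2 ^ (t + 1) * q + r := (Nat.div_add_mod i (2 ^ (t + 1))).symm
  have hrlt : r < 2 ^ (t + 1) := Nat.mod_lt _ (Nat.two_pow_pos _)
  have hrt : r.testBit t = false := by
    rw [hr, Nat.testBit_mod_two_pow]
    simp [h]
  have hrlt' : r < 2 ^ t := by
    by_contra hge
    push_neg at hge
    have hrdec : r = 2 ^ t * 1 + (r - 2 ^ t) := by omega
    have hblt : r - 2 ^ t < 2 ^ t := by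
      have : 2 ^ (t + 1) = 2 ^ t * 2 := by ring
      omega
    rw [hrdec, Nat.testBit_two_pow_mul_add _ hblt] at hrt
    simp at hrt
  have hsum : i + 2 ^ t = 2 ^ (t + 1) * q + (r + 2 ^ t) := by omega
  have hslt : r + 2 ^ t < 2 ^ (t + 1) := by
    have : 2 ^ (t + 1) = 2 ^ t * 2 := by ring
    omega
  rw [hdecomp, Nat.testBit_two_pow_mul_add _ hrlt] at hs
  rw [hsum, Nat.testBit_two_pow_mul_add _ hslt]
  by_cases hcase : s < t + 1
  · simp only [hcase, if_true] at hs ⊢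
    rcases Nat.lt_or_ge s t with hst | hst
    · have hrdec : r + 2 ^ t = 2 ^ t * 1 + r := by omega
      rw [hrdec, Nat.testBit_two_pow_mul_add _ hrlt']
      simp only [hst, if_true]
      exact hs
    · have hst' : s = t := by omega
      subst hst'
      rw [hrt] at hs; exact absurd hs (by simp)
  · simp only [hcase, if_false] at hs ⊢
    exact hs

lemma zstep_fixed (n t : ℕ) (X : Finset ℕ) (hX : X ⊆ Finset.range (2 ^ n))
    (hdc : ∀ j ∈ X, ∀ i, bdom i j → i ∈ X) : zstep n t X = X := by
  ext i
  simp only [zstep, Finset.mem_filter, Finset.mem_range]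
  constructor
  · rintro ⟨hi, hcond⟩
    cases hb : i.testBit t with
    | true => simp [hb] at hcond; exact hcond.1
    | false =>
      simp only [hb, Bool.false_eq_true, if_false] at hcond
      rcases hcond with hc | hc
      · exact hc
      · exact hdc _ hc i (bdom_add hb)
  · intro hi
    refine ⟨Finset.mem_range.mp (hX hi), ?_⟩
    cases hb : i.testBit t with
    | true => simp only [hb, if_true]; exact ⟨hi, hdc _ hi _ (bdom_sub hb)⟩
    | false => simp only [hb, Bool.false_eq_true, if_false]; exact Or.inl hi

/-- a puncturing set that is downward closed under binary domination
is an identical puncturing bit pattern: `U_p(X) = X`. -/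
theorem identical_puncturing_pattern (n : ℕ) (hn : 1 ≤ n)
    (X : Finset ℕ) (hX : X ⊆ Finset.range (2 ^ n))
    (hdc : ∀ j ∈ X, ∀ i, bdom i j → i ∈ X) :
    Up n X = X := by
  have key : ∀ m t, n - t ≤ m → Zstage n X t = X := by
    intro m
    induction m with
    | zero =>
      intro t ht
      rw [Zstage, dif_pos (by omega)]
    | succ m ih =>
      intro t ht
      by_cases h : n ≤ t
      · rw [Zstage, dif_pos h]
      · rw [Zstage, dif_neg h, ih (t + 1) (by omega), zstep_fixed n t X hX hdc]
  exact key n 0 (by omega)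
end

section
/- For every n ≥ 1 and every puncturing set X ⊆ {0,…,2^n−1} that is upward closed under binary domination (j ∈ X, j ⪯ k, and k < 2^n imply k ∈ X), the resulting incapable bit pattern is the bitwise complement of the puncturing pattern: U_p(X) = {(2^n − 1) − x : x ∈ X}. -/
lemma xor_pow_add : ∀ (t i : ℕ), i.testBit t = false → i ^^^ 2 ^ t = i + 2 ^ t := by
  intro t
  induction t with
  | zero =>
    intro i h
    have h0 : i % 2 = 0 := by
      simpa [Nat.testBit_zero] using h
    have h1 : (i ^^^ 2 ^ 0) / 2 = i / 2 := by
      simp [Nat.xor_div_two]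
    have h2 : (i ^^^ 2 ^ 0) % 2 = (i + 2 ^ 0) % 2 := by
      simpa using Nat.xor_mod_two_eq (m := i) (n := 2 ^ 0)
    omega
  | succ t ih =>
    intro i h
    have hd : (i / 2).testBit t = false := by
      rw [Nat.testBit_div_two]; exact h
    have h1 : (i ^^^ 2 ^ (t + 1)) / 2 = i / 2 + 2 ^ t := by
      rw [Nat.xor_div_two]
      have : 2 ^ (t + 1) / 2 = 2 ^ t := by
        rw [pow_succ]; omega
      rw [this, ih _ hd]
    have h2 : (i ^^^ 2 ^ (t + 1)) % 2 = (i + 2 ^ (t + 1)) % 2 :=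
      Nat.xor_mod_two_eq
    have h3 : 2 ^ (t + 1) = 2 * 2 ^ t := by rw [pow_succ]; ring
    omega

lemma xor_pow_sub (t i : ℕ) (h : i.testBit t = true) : i ^^^ 2 ^ t = i - 2 ^ t := by
  set j := i ^^^ 2 ^ t with hj
  have hjt : j.testBit t = false := by
    simp [hj, Nat.testBit_xor, h, Nat.testBit_two_pow]
  have hji : j ^^^ 2 ^ t = i := by rw [hj, Nat.xor_assoc]; simp
  have := xor_pow_add t j hjt
  omega

lemma mask_testBit {n t : ℕ} (h : t ≤ n) (s : ℕ) :
    (2 ^ n - 2 ^ t).testBit s = (decide (t ≤ s) && decide (s < n)) := by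
  have h1 : 2 ^ t - 1 + 1 = 2 ^ t := Nat.sub_add_cancel (Nat.one_le_two_pow)
  have h2 : 2 ^ t - 1 < 2 ^ n :=
    lt_of_lt_of_le (Nat.sub_lt (Nat.two_pow_pos t) one_pos) (Nat.pow_le_pow_right (by norm_num) h)
  have := Nat.testBit_two_pow_sub_succ h2 s
  rw [h1] at this
  rw [this, Nat.testBit_two_pow_sub_one]
  by_cases hs : t ≤ s <;> by_cases hs2 : s < n <;> simp [hs, hs2] <;> omega

lemma mask_succ {n t : ℕ} (h : t < n) : 2 ^ n - 2 ^ t = 2 ^ t ^^^ (2 ^ n - 2 ^ (t + 1)) := by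
  have hb : (2 ^ n - 2 ^ (t + 1)).testBit t = false := by
    rw [mask_testBit h]; simp
  have := xor_pow_add t _ hb
  rw [Nat.xor_comm, this]
  have h3 : 2 ^ (t + 1) = 2 * 2 ^ t := by rw [pow_succ]; ring
  have h4 : 2 ^ (t + 1) ≤ 2 ^ n := Nat.pow_le_pow_right (by norm_num) h
  omega

lemma compl_xor_eq_sub : ∀ (n x : ℕ), x < 2 ^ n → (2 ^ n - 1) ^^^ x = 2 ^ n - 1 - x := by
  intro n
  induction n with
  | zero => intro x hx; interval_cases x <;> rfl
  | succ n ih =>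
    intro x hx
    have h3 : 2 ^ (n + 1) = 2 * 2 ^ n := by rw [pow_succ]; ring
    have hx2 : x / 2 < 2 ^ n := by omega
    have h1 : ((2 ^ (n + 1) - 1) ^^^ x) / 2 = 2 ^ n - 1 - x / 2 := by
      rw [Nat.xor_div_two]
      have : (2 ^ (n + 1) - 1) / 2 = 2 ^ n - 1 := by omega
      rw [this, ih _ hx2]
    have h2 : ((2 ^ (n + 1) - 1) ^^^ x) % 2 = (2 ^ (n + 1) - 1 + x) % 2 :=
      Nat.xor_mod_two_eq
    omega
section Main
variable {n : ℕ} {X : Finset ℕ}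

lemma stage_mem (hX : X ⊆ Finset.range (2 ^ n))
    (huc : ∀ j ∈ X, ∀ k, k < 2 ^ n → bdom j k → k ∈ X) :
    ∀ d, d ≤ n → ∀ i, i ∈ Zstage n X (n - d) ↔
      i < 2 ^ n ∧ (i ^^^ (2 ^ n - 2 ^ (n - d))) ∈ X := by
  intro d
  induction d with
  | zero =>
    intro _ i
    rw [Nat.sub_zero, Zstage, dif_pos (le_refl n)]
    simp only [Nat.sub_self, Nat.xor_zero]
    exact ⟨fun h => ⟨Finset.mem_range.mp (hX h), h⟩, fun h => h.2⟩
  | succ d ih =>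
    intro hd i
    set t := n - (d + 1) with htdef
    have ht : t < n := by omega
    have ht1 : t + 1 = n - d := by omega
    have IH : ∀ i, i ∈ Zstage n X (t + 1) ↔
        i < 2 ^ n ∧ (i ^^^ (2 ^ n - 2 ^ (t + 1))) ∈ X := by
      rw [ht1]; exact ih (by omega)
    have hptlt : 2 ^ t < 2 ^ n := Nat.pow_lt_pow_right (by norm_num) ht
    have hp1lt : 2 ^ (t + 1) ≤ 2 ^ n := Nat.pow_le_pow_right (by norm_num) ht
    have hMlt : 2 ^ n - 2 ^ t < 2 ^ n := by
      have := Nat.two_pow_pos t; omega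
    have hM'lt : 2 ^ n - 2 ^ (t + 1) < 2 ^ n := by
      have := Nat.two_pow_pos (t + 1); omega
    have hM : 2 ^ n - 2 ^ t = 2 ^ t ^^^ (2 ^ n - 2 ^ (t + 1)) := mask_succ ht
    have hmb : (2 ^ n - 2 ^ t).testBit t = true := by
      rw [mask_testBit (le_of_lt ht)]; simp [ht]
    rw [Zstage, dif_neg (by omega : ¬ n ≤ t)]
    simp only [zstep, Finset.mem_filter, Finset.mem_range]
    set j := i ^^^ (2 ^ n - 2 ^ t) with hjdef
    cases hb : i.testBit t with
    | true =>
      rw [if_pos rfl]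
      have hsub : i - 2 ^ t = i ^^^ 2 ^ t := (xor_pow_sub t i hb).symm
      have e1 : (i - 2 ^ t) ^^^ (2 ^ n - 2 ^ (t + 1)) = j := by
        rw [hsub, hjdef, hM, Nat.xor_assoc]
      have e2 : i ^^^ (2 ^ n - 2 ^ (t + 1)) = j ^^^ 2 ^ t := by
        have : j ^^^ 2 ^ t = i ^^^ (2 ^ n - 2 ^ (t + 1)) := by
          rw [hjdef, hM, Nat.xor_assoc, Nat.xor_comm (2 ^ t), xor_cancel_right]
        exact this.symm
      have jbit : j.testBit t = false := by
        rw [hjdef, Nat.testBit_xor, hb, hmb]; rfl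
      have e3 : j ^^^ 2 ^ t = j + 2 ^ t := xor_pow_add t j jbit
      constructor
      · rintro ⟨hi, h1, h2⟩
        rw [IH] at h2
        exact ⟨hi, e1 ▸ h2.2⟩
      · rintro ⟨hi, hj⟩
        have hjlt : j < 2 ^ n := Nat.xor_lt_two_pow hi hMlt
        have hklt : j + 2 ^ t < 2 ^ n := by
          rw [← e3]; exact Nat.xor_lt_two_pow hjlt hptlt
        have hdom : bdom j (j + 2 ^ t) := by
          intro s hs
          have hst : t ≠ s := by
            intro h; subst h; rw [jbit] at hs; exact absurd hs (by simp)
          rw [← e3, Nat.testBit_xor, hs, Nat.testBit_two_pow]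
          simp [hst]
        refine ⟨hi, ?_, ?_⟩
        · rw [IH, e2, e3]
          exact ⟨hi, huc j hj _ hklt hdom⟩
        · rw [IH, e1]
          exact ⟨by omega, hj⟩
    | false =>
      rw [if_neg (by simp)]
      have hadd : i + 2 ^ t = i ^^^ 2 ^ t := (xor_pow_add t i hb).symm
      have e1 : (i + 2 ^ t) ^^^ (2 ^ n - 2 ^ (t + 1)) = j := by
        rw [hadd, hjdef, hM, Nat.xor_assoc]
      have e2 : i ^^^ (2 ^ n - 2 ^ (t + 1)) = j ^^^ 2 ^ t := by
        have : j ^^^ 2 ^ t = i ^^^ (2 ^ n - 2 ^ (t + 1)) := by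
          rw [hjdef, hM, Nat.xor_assoc, Nat.xor_comm (2 ^ t), xor_cancel_right]
        exact this.symm
      have jbit : j.testBit t = true := by
        rw [hjdef, Nat.testBit_xor, hb, hmb]; rfl
      have e3 : j ^^^ 2 ^ t = j - 2 ^ t := xor_pow_sub t j jbit
      constructor
      · rintro ⟨hi, h1⟩
        refine ⟨hi, ?_⟩
        have hjlt : j < 2 ^ n := Nat.xor_lt_two_pow hi hMlt
        cases h1 with
        | inl h =>
          rw [IH] at h
          have hjx : j - 2 ^ t ∈ X := by rw [← e3, ← e2]; exact h.2
          have hdom : bdom (j - 2 ^ t) j := by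
            intro s hs
            rw [← e3, Nat.testBit_xor, Nat.testBit_two_pow] at hs
            by_cases h' : t = s
            · subst h'; rw [jbit] at hs; simp at hs
            · simp [h'] at hs; exact hs
          exact huc _ hjx j hjlt hdom
        | inr h =>
          rw [IH] at h
          exact e1 ▸ h.2
      · rintro ⟨hi, hj⟩
        refine ⟨hi, Or.inr ?_⟩
        rw [IH, e1]
        have : i + 2 ^ t < 2 ^ n := by rw [hadd]; exact Nat.xor_lt_two_pow hi hptlt
        exact ⟨this, hj⟩

end Main

/-- a puncturing set that is upward closed under binary domination is a
reverse puncturing bit pattern: `U_p(X)` is the bitwise complement of `X`. -/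
theorem reverse_puncturing_pattern (n : ℕ) (hn : 1 ≤ n)
    (X : Finset ℕ) (hX : X ⊆ Finset.range (2 ^ n))
    (huc : ∀ j ∈ X, ∀ k, k < 2 ^ n → bdom j k → k ∈ X) :
    Up n X = X.image fun x => 2 ^ n - 1 - x := by
  have key := stage_mem hX huc n (le_refl n)
  rw [Nat.sub_self] at key
  ext i
  rw [Up]
  rw [key i]
  simp only [Finset.mem_image, pow_zero]
  constructor
  · rintro ⟨hi, hx⟩
    refine ⟨i ^^^ (2 ^ n - 1), hx, ?_⟩
    have hxlt : i ^^^ (2 ^ n - 1) < 2 ^ n := Finset.mem_range.mp (hX hx)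
    rw [← compl_xor_eq_sub n _ hxlt, Nat.xor_comm i, ← Nat.xor_assoc]
    simp
  · rintro ⟨x, hx, rfl⟩
    have hxlt : x < 2 ^ n := Finset.mem_range.mp (hX hx)
    have hc : 2 ^ n - 1 - x = (2 ^ n - 1) ^^^ x := (compl_xor_eq_sub n x hxlt).symm
    rw [hc]
    have h1lt : 2 ^ n - 1 < 2 ^ n := by have := Nat.two_pow_pos n; omega
    refine ⟨Nat.xor_lt_two_pow h1lt hxlt, ?_⟩
    rw [Nat.xor_comm, xor_cancel_left]
    exact hx
end

section
/- For every n ≥ 1 and every puncturing set X ⊆ {0,…,2^n−1} that is upward closed under binary domination (j ∈ X, j ⪯ k, and k < 2^n imply k ∈ X), the zero-LLR set at each stage t with 0 ≤ t ≤ n is obtained by flipping the binary digits t, t+1, …, n−1 of each element of X: Z_t(X) = {x XOR (2^n − 2^t) : x ∈ X}, where XOR denotes bitwise exclusive-or of natural numbers. -/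
lemma testBit_mask {n t : ℕ} (ht : t ≤ n) (s : ℕ) :
    (2^n - 2^t).testBit s = (decide (t ≤ s) && decide (s < n)) := by
  have h1 : 2^n - 2^t = (2^(n-t) - 1) * 2^t := by
    rw [Nat.sub_mul, one_mul, ← pow_add]
    congr 2
    omega
  rw [h1, ← Nat.shiftLeft_eq, Nat.testBit_shiftLeft, Nat.testBit_two_pow_sub_one]
  by_cases h : t ≤ s
  · simp only [h, decide_true, Bool.true_and, decide_eq_decide]
    omega
  · simp [h]

lemma mod_lt_of_testBit_false {x t : ℕ} (h : x.testBit t = false) :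
    x % 2^(t+1) < 2^t := by
  apply Nat.lt_pow_two_of_testBit
  intro i hi
  rw [Nat.testBit_mod_two_pow]
  rcases eq_or_lt_of_le hi with rfl | hlt
  · simp [h]
  · simp [show ¬ (i < t + 1) by omega]

lemma add_pow_eq_xor {x t : ℕ} (h : x.testBit t = false) : x + 2^t = x ^^^ 2^t := by
  have hdiv : (x + 2^t) / 2^(t+1) = x / 2^(t+1) := by
    have hr := mod_lt_of_testBit_false h
    have hx := Nat.div_add_mod x (2^(t+1))
    have h2 : 2^(t+1) = 2 * 2^t := by ring
    set q := x / 2^(t+1) with hq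
    set r := x % 2^(t+1) with hrr
    have : x + 2^t = 2^(t+1) * q + (r + 2^t) := by omega
    rw [this, Nat.mul_add_div (Nat.two_pow_pos _), Nat.div_eq_of_lt (by omega), Nat.add_zero]
  apply Nat.eq_of_testBit_eq
  intro j
  rw [Nat.testBit_xor, Nat.testBit_two_pow]
  rcases lt_trichotomy j t with hj | rfl | hj
  · rw [Nat.add_comm, Nat.testBit_two_pow_add_gt hj]
    simp [show ¬ (t = j) by omega]
  · rw [Nat.add_comm, Nat.testBit_two_pow_add_eq, h]
    simp
  · have hsplit : ∀ z : ℕ, z.testBit j = (z / 2^(t+1)).testBit (j - (t+1)) := by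
      intro z
      rw [Nat.testBit_eq_decide_div_mod_eq, Nat.testBit_eq_decide_div_mod_eq, Nat.div_div_eq_div_mul, ← pow_add,
        show t+1+(j-(t+1)) = j by omega]
    rw [hsplit, hsplit x, hdiv]
    simp [show ¬ (t = j) by omega]

lemma sub_pow_eq_xor {x t : ℕ} (h : x.testBit t = true) : x - 2^t = x ^^^ 2^t := by
  have hy : (x ^^^ 2^t).testBit t = false := by
    simp [Nat.testBit_xor, h, Nat.testBit_two_pow]
  have := add_pow_eq_xor hy
  rw [Nat.xor_assoc, Nat.xor_self, Nat.xor_zero] at this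
  omega

lemma mem_image_xor {S : Finset ℕ} {m i : ℕ} :
    i ∈ S.image (fun x => x ^^^ m) ↔ i ^^^ m ∈ S := by
  simp only [Finset.mem_image]
  constructor
  · rintro ⟨x, hx, rfl⟩
    rwa [Nat.xor_assoc, Nat.xor_self, Nat.xor_zero]
  · intro h
    exact ⟨i ^^^ m, h, by rw [Nat.xor_assoc, Nat.xor_self, Nat.xor_zero]⟩

/-- for an upward-closed puncturing set, the zero-LLR set at stage
`t ≤ n` is obtained by flipping binary digits `t, …, n−1` of each element of `X`. -/
theorem upward_closed_stage_sets (n : ℕ) (hn : 1 ≤ n)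
    (X : Finset ℕ) (hX : X ⊆ Finset.range (2 ^ n))
    (huc : ∀ j ∈ X, ∀ k, k < 2 ^ n → bdom j k → k ∈ X)
    (t : ℕ) (ht : t ≤ n) :
    Zstage n X t = X.image fun x => x ^^^ (2 ^ n - 2 ^ t) := by
  have key : ∀ d t, t ≤ n → n - t = d →
      Zstage n X t = X.image fun x => x ^^^ (2 ^ n - 2 ^ t) := by
    intro d
    induction d with
    | zero =>
      intro t ht hd
      have : t = n := by omega
      subst this
      rw [Zstage, dif_pos le_rfl]
      simp
    | succ d ih =>
      intro t ht hd
      have htn : t < n := by omega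
      have ih' := ih (t + 1) (by omega) (by omega)
      rw [Zstage, dif_neg (by omega : ¬ n ≤ t), ih']
      set m := 2 ^ n - 2 ^ t with hmdef
      set m' := 2 ^ n - 2 ^ (t + 1) with hm'def
      have hpt : (0:ℕ) < 2 ^ t := Nat.two_pow_pos t
      have h2n : 2 ^ t < 2 ^ n := Nat.pow_lt_pow_right (by norm_num) htn
      have hmlt : m < 2 ^ n := by omega
      have hm : m = m' ^^^ 2 ^ t := by
        apply Nat.eq_of_testBit_eq
        intro s
        rw [Nat.testBit_xor, testBit_mask (by omega), testBit_mask (by omega),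
          Nat.testBit_two_pow]
        rcases lt_trichotomy s t with hs | rfl | hs
        · simp [show ¬ (t ≤ s) by omega, show ¬ (t + 1 ≤ s) by omega,
            show ¬ (t = s) by omega]
        · simp [show ¬ (t + 1 ≤ t) by omega, htn]
        · simp [show t ≤ s by omega, show t + 1 ≤ s by omega, show ¬ (t = s) by omega]
      have hmm' : ∀ z : ℕ, z ^^^ m' = (z ^^^ m) ^^^ 2 ^ t := by
        intro z
        rw [Nat.xor_assoc, hm, Nat.xor_assoc, Nat.xor_self, Nat.xor_zero]
      have hmt : m.testBit t = true := by
        rw [testBit_mask (by omega)]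
        simp [htn]
      ext i
      simp only [zstep, Finset.mem_filter, Finset.mem_range, mem_image_xor]
      have hi_eq : i = (i ^^^ m) ^^^ m := by
        rw [Nat.xor_assoc, Nat.xor_self, Nat.xor_zero]
      by_cases hit : i.testBit t
      · rw [if_pos hit]
        have hsub : (i - 2 ^ t) ^^^ m' = i ^^^ m := by
          rw [sub_pow_eq_xor hit, Nat.xor_assoc, Nat.xor_comm (2^t) m', ← hm]
        have hyt : (i ^^^ m).testBit t = false := by
          rw [Nat.testBit_xor, hit, hmt]; rfl
        constructor
        · rintro ⟨hilt, _, hb⟩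
          rwa [hsub] at hb
        · intro hy
          have hylt : i ^^^ m < 2 ^ n := Finset.mem_range.mp (hX hy)
          refine ⟨?_, ?_, ?_⟩
          · rw [hi_eq]; exact Nat.xor_lt_two_pow hylt hmlt
          · rw [hmm']
            refine huc _ hy _ (Nat.xor_lt_two_pow hylt h2n) ?_
            intro s hs
            rw [Nat.testBit_xor, Nat.testBit_two_pow]
            by_cases hst : t = s
            · subst hst; rw [hyt] at hs; exact absurd hs (by simp)
            · simp [hs, hst]
          · rwa [hsub]
      · rw [if_neg hit]
        have hif : i.testBit t = false := by simpa using hit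
        have hadd : (i + 2 ^ t) ^^^ m' = i ^^^ m := by
          rw [add_pow_eq_xor hif, Nat.xor_assoc, Nat.xor_comm (2^t) m', ← hm]
        have hyt : (i ^^^ m).testBit t = true := by
          rw [Nat.testBit_xor, hif, hmt]
          rfl
        constructor
        · rintro ⟨hilt, ha | hb⟩
          · rw [hmm'] at ha
            have hylt : i ^^^ m < 2 ^ n := Nat.xor_lt_two_pow hilt hmlt
            refine huc _ ha _ hylt ?_
            intro s hs
            rw [Nat.testBit_xor, Nat.testBit_two_pow] at hs
            by_cases hst : t = s
            · subst hst; exact hyt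
            · simpa [hst] using hs
          · rwa [hadd] at hb
        · intro hy
          have hylt : i ^^^ m < 2 ^ n := Finset.mem_range.mp (hX hy)
          refine ⟨?_, Or.inr ?_⟩
          · rw [hi_eq]; exact Nat.xor_lt_two_pow hylt hmlt
          · rwa [hadd]
  exact key (n - t) t ht rfl
end

section
/- For every n ≥ 0, every shortening set U ⊆ {0,…,2^n−1}, and every j < 2^n: the encoder output bit j is fixed to zero by shortening the bits in U, i.e. j ∈ X_s(U), if and only if the dominating set of j is contained in U, i.e. G_j = {i < 2^n : j ⪯ i} ⊆ U. -/
/-- Polar encoder `u ↦ u · F₂^{⊗n}` over GF(2), with `F₂ = [[1,0],[1,1]]`: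
`enc 0 u = u`, and `enc (n+1) u` is the concatenation of `enc n (u_L + u_H)`
(on indices `< 2^n`) followed by `enc n u_H` (on indices `2^n, …, 2^(n+1)-1`). -/
def enc : ℕ → (ℕ → ZMod 2) → (ℕ → ZMod 2)
  | 0, u => u
  | n + 1, u => fun j =>
      if j < 2 ^ n then enc n (fun i => u i + u (i + 2 ^ n)) j
      else enc n (fun i => u (i + 2 ^ n)) (j - 2 ^ n)

/-- The fixed bit pattern at the encoder output resulting from shortening the
encoder input bits with indices in `U`. -/
def Xs (n : ℕ) (U : Set ℕ) : Set ℕ :=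
  {j | j < 2 ^ n ∧ ∀ u : ℕ → ZMod 2, (∀ i ∈ U, u i = 0) → enc n u j = 0}

lemma testBit_add_pow {n i : ℕ} (hi : i < 2 ^ n) (t : ℕ) :
    (i + 2 ^ n).testBit t = if t = n then true else i.testBit t := by
  rcases lt_trichotomy t n with h | h | h
  · rw [if_neg h.ne, Nat.testBit_eq_decide_div_mod_eq, Nat.testBit_eq_decide_div_mod_eq]
    have h1 : (i + 2 ^ n) / 2 ^ t = i / 2 ^ t + 2 ^ (n - t) := by
      have : 2 ^ n = 2 ^ (n - t) * 2 ^ t := by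
        rw [← pow_add]; congr 1; omega
      rw [this, Nat.add_mul_div_right _ _ (Nat.two_pow_pos t)]
    have h2 : 2 ^ (n - t) = 2 * 2 ^ (n - t - 1) := by
      rw [← pow_succ']; congr 1; omega
    rw [h1, h2, Nat.add_mul_mod_self_left]
  · subst h
    rw [if_pos rfl, Nat.testBit_eq_decide_div_mod_eq]
    have : (i + 2 ^ t) / 2 ^ t = 1 := by
      rw [Nat.add_div_right _ (Nat.two_pow_pos t), Nat.div_eq_of_lt hi]
    simp [this]
  · rw [if_neg (by omega), Nat.testBit_eq_false_of_lt, Nat.testBit_eq_false_of_lt]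
    · exact lt_of_lt_of_le hi (Nat.pow_le_pow_right (by norm_num) h.le)
    · have : 2 ^ (n + 1) ≤ 2 ^ t := Nat.pow_le_pow_right (by norm_num) h
      have : i + 2 ^ n < 2 ^ (n + 1) := by rw [pow_succ]; omega
      omega

lemma testBit_lt_ne (n j t : ℕ) (hj : j < 2 ^ n) (ht : j.testBit t = true) : t < n := by
  by_contra h
  rw [Nat.testBit_eq_false_of_lt (lt_of_lt_of_le hj (Nat.pow_le_pow_right (by norm_num) (by omega)))] at ht
  exact Bool.false_ne_true ht

lemma bdom_shift {n j i : ℕ} (hj : j < 2 ^ n) (hi : i < 2 ^ n) :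
    bdom j (i + 2 ^ n) ↔ bdom j i := by
  constructor <;> intro h t hjt <;> have ht := testBit_lt_ne n j t hj hjt <;>
    have := h t hjt <;> rw [testBit_add_pow hi t, if_neg ht.ne] at *
  · exact this
  · exact this

lemma not_bdom_high {n j i : ℕ} (hj2 : 2 ^ n ≤ j) (hj : j < 2 ^ (n + 1)) (hi : i < 2 ^ n) :
    ¬ bdom j i := by
  intro h
  have hjn : j.testBit n = true := by
    have : j = (j - 2 ^ n) + 2 ^ n := by omega
    rw [this, testBit_add_pow (by rw [pow_succ] at hj; omega) n, if_pos rfl]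
  have := h n hjn
  rw [Nat.testBit_eq_false_of_lt hi] at this
  exact Bool.false_ne_true this

lemma bdom_high_shift {n j i : ℕ} (hj : j < 2 ^ n) (hi : i < 2 ^ n) :
    bdom (j + 2 ^ n) (i + 2 ^ n) ↔ bdom j i := by
  constructor
  · intro h t hjt
    have ht := testBit_lt_ne n j t hj hjt
    have h1 : (j + 2 ^ n).testBit t = true := by
      rw [testBit_add_pow hj t, if_neg ht.ne]; exact hjt
    have := h t h1
    rwa [testBit_add_pow hi t, if_neg ht.ne] at this
  · intro h t hjt
    rw [testBit_add_pow hj t] at hjt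
    rw [testBit_add_pow hi t]
    by_cases ht : t = n
    · simp [ht]
    · rw [if_neg ht] at hjt ⊢; exact h t hjt

lemma enc_eq_sum (n : ℕ) (u : ℕ → ZMod 2) (j : ℕ) (hj : j < 2 ^ n) :
    enc n u j = ∑ i ∈ Finset.range (2 ^ n), if bdom j i then u i else 0 := by
  induction n generalizing u j with
  | zero =>
    interval_cases j
    simp [enc, bdom]
  | succ n ih =>
    have hsplit : ∀ f : ℕ → ZMod 2, ∑ i ∈ Finset.range (2 ^ (n + 1)), f i =
        (∑ i ∈ Finset.range (2 ^ n), f i) + ∑ i ∈ Finset.range (2 ^ n), f (i + 2 ^ n) := by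
      intro f
      rw [Finset.range_eq_Ico, ← Finset.sum_Ico_consecutive f (Nat.zero_le (2 ^ n))
        (by rw [pow_succ]; omega)]
      congr 1
      · rw [Finset.range_eq_Ico]
      rw [Finset.sum_Ico_eq_sum_range]
      have h1 : 2 ^ (n + 1) - 2 ^ n = 2 ^ n := by rw [pow_succ]; omega
      rw [h1]
      rw [Finset.range_eq_Ico]
      exact Finset.sum_congr rfl fun x _ => by rw [add_comm]
    rw [hsplit]
    by_cases h : j < 2 ^ n
    · rw [show enc (n + 1) u j = enc n (fun i => u i + u (i + 2 ^ n)) j from if_pos h,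
        ih _ j h, ← Finset.sum_add_distrib]
      apply Finset.sum_congr rfl
      intro i hi
      rw [Finset.mem_range] at hi
      simp only [bdom_shift h hi]
      split_ifs <;> simp
    · have hj' : j - 2 ^ n < 2 ^ n := by rw [pow_succ] at hj; omega
      rw [show enc (n + 1) u j = enc n (fun i => u (i + 2 ^ n)) (j - 2 ^ n) from if_neg h,
        ih _ _ hj']
      have hz : ∀ i ∈ Finset.range (2 ^ n), (if bdom j i then u i else 0) = 0 := by
        intro i hi
        rw [Finset.mem_range] at hi
        rw [if_neg (not_bdom_high (by omega) hj hi)]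
      rw [Finset.sum_congr rfl hz, Finset.sum_const_zero, zero_add]
      apply Finset.sum_congr rfl
      intro i hi
      rw [Finset.mem_range] at hi
      have key : bdom j (i + 2 ^ n) ↔ bdom (j - 2 ^ n) i := by
        conv_lhs => rw [show j = (j - 2 ^ n) + 2 ^ n from by omega]
        exact bdom_high_shift hj' hi
      simp only [key]


/-- output bit `j` is fixed to zero by shortening the bits in `U` iff
the dominating set `G_j = {i < 2^n : j ⪯ i}` is contained in `U`. -/
theorem fixed_iff_dominating_subset (n : ℕ) (U : Set ℕ) (hU : ∀ i ∈ U, i < 2 ^ n)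
    (j : ℕ) (hj : j < 2 ^ n) :
    j ∈ Xs n U ↔ ∀ i, i < 2 ^ n → bdom j i → i ∈ U := by
  constructor
  · rintro ⟨-, h⟩ i hi hbd
    by_contra hiU
    have := h (fun k => if k = i then 1 else 0) (by
      intro k hk
      simp only [ite_eq_right_iff]
      intro hk'; exact absurd (hk' ▸ hk) hiU)
    rw [enc_eq_sum n _ j hj] at this
    rw [Finset.sum_eq_single i] at this
    · rw [if_pos hbd, if_pos rfl] at this
      exact one_ne_zero this
    · intro k hk hki
      simp [hki]
    · intro hmem
      exact absurd (Finset.mem_range.mpr hi) hmem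
  · intro h
    refine ⟨hj, fun u hu => ?_⟩
    rw [enc_eq_sum n u j hj]
    apply Finset.sum_eq_zero
    intro i hi
    split_ifs with hb
    · exact hu i (h i (Finset.mem_range.mp hi) hb)
    · rfl
end
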